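/- arXiv:2010.08494 — 6 statements merged into one kernel-verified Lean document; each statement's English description precedes it below -/
import Mathlib

section
/- For any square matrix A and vectors v, g, the function y(t) = v + t·φ(−tA)(g − Av) satisfies the initial value problem y'(t) = −A y(t) + g with y(0) = v, where φ(z) = (e^z − 1)/z (φ(0)=1) is applied to the matrix −tA. -/
open Matrix

/-- The matrix function `φ(M) = Σ_{k≥0} M^k/(k+1)!`. -/
noncomputable def phiMat {n : ℕ} (M : Matrix (Fin n) (Fin n) ℝ) : Matrix (Fin n) (Fin n) ℝ :=
  ∑' k : ℕ, (((k + 1).factorial : ℝ))⁻¹ • M ^ k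

section Aux

variable {n : ℕ}

/-- `mulVec` by a matrix, as a continuous linear map. -/
noncomputable def clmOf (M : Matrix (Fin n) (Fin n) ℝ) : (Fin n → ℝ) →L[ℝ] (Fin n → ℝ) :=
  LinearMap.toContinuousLinearMap M.mulVecLin

lemma clmOf_apply (M : Matrix (Fin n) (Fin n) ℝ) (x : Fin n → ℝ) :
    clmOf M x = M.mulVec x := rfl

lemma clmOf_pow (M : Matrix (Fin n) (Fin n) ℝ) (k : ℕ) (x : Fin n → ℝ) :
    (M ^ k).mulVec x = ((clmOf M) ^ k) x := by
  induction k generalizing x with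
  | zero => simp [Matrix.one_mulVec]
  | succ k ih =>
      rw [pow_succ, pow_succ, ContinuousLinearMap.mul_apply]
      rw [← Matrix.mulVec_mulVec, ih]
      rfl

lemma clm_pow_apply_norm_le (T : (Fin n → ℝ) →L[ℝ] (Fin n → ℝ)) (k : ℕ) (x : Fin n → ℝ) :
    ‖(T ^ k) x‖ ≤ ‖T‖ ^ k * ‖x‖ := by
  induction k generalizing x with
  | zero => simp
  | succ k ih =>
      rw [pow_succ, ContinuousLinearMap.mul_apply]
      calc ‖(T ^ k) (T x)‖ ≤ ‖T‖ ^ k * ‖T x‖ := ih _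
        _ ≤ ‖T‖ ^ k * (‖T‖ * ‖x‖) :=
            mul_le_mul_of_nonneg_left (T.le_opNorm x) (by positivity)
        _ = ‖T‖ ^ (k + 1) * ‖x‖ := by ring

/-- the linear map sending a continuous linear endomorphism to its matrix -/
noncomputable def clmToMat :
    ((Fin n → ℝ) →L[ℝ] (Fin n → ℝ)) →ₗ[ℝ] Matrix (Fin n) (Fin n) ℝ :=
  (LinearMap.toMatrix' : ((Fin n → ℝ) →ₗ[ℝ] (Fin n → ℝ)) ≃ₗ[ℝ] _).toLinearMap ∘ₗ
    ContinuousLinearMap.coeLM ℝ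

lemma clmToMat_clmOf_pow (M : Matrix (Fin n) (Fin n) ℝ) (k : ℕ) :
    clmToMat ((clmOf M) ^ k) = M ^ k := by
  have h1 : (ContinuousLinearMap.coeLM ℝ ((clmOf M) ^ k) :
      (Fin n → ℝ) →ₗ[ℝ] (Fin n → ℝ)) = Matrix.mulVecLin (M ^ k) := by
    apply LinearMap.ext
    intro x
    simp only [ContinuousLinearMap.coeLM_apply, ContinuousLinearMap.coe_coe,
      Matrix.mulVecLin_apply]
    exact (clmOf_pow M k x).symm
  show LinearMap.toMatrix' (ContinuousLinearMap.coeLM ℝ ((clmOf M) ^ k)) = M ^ k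
  rw [h1, ← Matrix.toLin'_apply' (M ^ k), LinearMap.toMatrix'_toLin']

/-- `M ↦ M.mulVec w` as a continuous linear map. -/
noncomputable def evw (w : Fin n → ℝ) :
    Matrix (Fin n) (Fin n) ℝ →L[ℝ] (Fin n → ℝ) :=
  LinearMap.toContinuousLinearMap
    { toFun := fun M => M.mulVec w
      map_add' := fun M M' => Matrix.add_mulVec M M' w
      map_smul' := fun c M => Matrix.smul_mulVec c M w }

lemma evw_apply (w : Fin n → ℝ) (M : Matrix (Fin n) (Fin n) ℝ) :
    evw w M = M.mulVec w := rfl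

end Aux

/-- `y(t) = v + t·φ(−tA)(g − Av)` solves `y' = −Ay + g`, `y(0) = v`. -/
theorem phi_solves_ivp {n : ℕ} (A : Matrix (Fin n) (Fin n) ℝ) (g v : Fin n → ℝ)
    (y : ℝ → Fin n → ℝ)
    (hy : y = fun t => v + t • ((phiMat (-(t • A))).mulVec (g - A.mulVec v))) :
    y 0 = v ∧ ∀ t : ℝ, HasDerivAt y (-(A.mulVec (y t)) + g) t := by
  classical
  set w : Fin n → ℝ := g - A.mulVec v with hw
  set N : (Fin n → ℝ) →L[ℝ] (Fin n → ℝ) := clmOf (-A) with hN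
  set u : ℕ → Fin n → ℝ := fun k => (N ^ k) w with hu
  have hunorm : ∀ k, ‖u k‖ ≤ ‖N‖ ^ k * ‖w‖ := fun k => clm_pow_apply_norm_le N k w
  have hNpow : ∀ k, ‖N ^ k‖ ≤ ‖N‖ ^ k := by
    intro k
    apply ContinuousLinearMap.opNorm_le_bound _ (by positivity)
    intro x
    exact clm_pow_apply_norm_le N k x
  have hfact_le : ∀ k : ℕ, ((k + 1).factorial : ℝ)⁻¹ ≤ ((k.factorial : ℝ))⁻¹ := by
    intro k
    apply inv_anti₀
    · exact_mod_cast Nat.factorial_pos k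
    · exact_mod_cast Nat.factorial_le (Nat.le_succ k)
  -- summability of the derivative series, with coefficient bound
  have hbnd : ∀ (s L : ℝ), |s| ≤ L → ∀ k : ℕ,
      ‖(((k.factorial : ℝ))⁻¹ * s ^ k) • u k‖ ≤
        (L * ‖N‖) ^ k / (k.factorial : ℝ) * ‖w‖ := by
    intro s L hs k
    rw [norm_smul, Real.norm_eq_abs, abs_mul, abs_inv, abs_pow, Nat.abs_cast]
    calc ((k.factorial : ℝ))⁻¹ * |s| ^ k * ‖u k‖
        ≤ ((k.factorial : ℝ))⁻¹ * L ^ k * (‖N‖ ^ k * ‖w‖) := by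
          have h1 : |s| ^ k ≤ L ^ k := pow_le_pow_left₀ (abs_nonneg s) hs k
          have h2 := hunorm k
          have h3 : (0:ℝ) ≤ ((k.factorial : ℝ))⁻¹ := by positivity
          have h4 : (0:ℝ) ≤ L ^ k := le_trans (by positivity) h1
          nlinarith [norm_nonneg (u k), abs_nonneg s, pow_nonneg (abs_nonneg s) k,
            mul_le_mul h1 h2 (norm_nonneg _) h4]
      _ = (L * ‖N‖) ^ k / (k.factorial : ℝ) * ‖w‖ := by rw [mul_pow]; ring
  have hmaj : ∀ L : ℝ, Summable fun k : ℕ =>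
      (L * ‖N‖) ^ k / (k.factorial : ℝ) * ‖w‖ :=
    fun L => (Real.summable_pow_div_factorial (L * ‖N‖)).mul_right ‖w‖
  have hsumder : ∀ (L : ℝ), Summable fun k : ℕ =>
      (L * ‖N‖) ^ k / (k.factorial : ℝ) * ‖w‖ := hmaj
  -- summability of the main (once-integrated) series
  have hsum : ∀ t : ℝ, Summable fun k : ℕ =>
      ((((k + 1).factorial : ℝ))⁻¹ * t ^ (k + 1)) • u k := by
    intro t
    apply Summable.of_norm_bounded
      (g := fun k => ((|t| + 1) * ‖N‖) ^ k / (k.factorial : ℝ) * ((|t| + 1) * ‖w‖))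
    · have := (Real.summable_pow_div_factorial ((|t| + 1) * ‖N‖)).mul_right
        ((|t| + 1) * ‖w‖)
      exact this
    · intro k
      rw [norm_smul, Real.norm_eq_abs, abs_mul, abs_inv, abs_pow, Nat.abs_cast]
      have h0 : ((k + 1).factorial : ℝ)⁻¹ ≤ ((k.factorial : ℝ))⁻¹ := hfact_le k
      have h1 : |t| ^ (k + 1) ≤ (|t| + 1) ^ k * (|t| + 1) := by
        rw [← pow_succ]
        exact pow_le_pow_left₀ (abs_nonneg t) (by linarith) (k + 1)
      have h2 := hunorm k
      calc ((k + 1).factorial : ℝ)⁻¹ * |t| ^ (k + 1) * ‖u k‖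
          ≤ ((k.factorial : ℝ))⁻¹ * ((|t| + 1) ^ k * (|t| + 1)) * (‖N‖ ^ k * ‖w‖) := by
            have hA : ((k + 1).factorial : ℝ)⁻¹ * |t| ^ (k + 1) ≤
                ((k.factorial : ℝ))⁻¹ * ((|t| + 1) ^ k * (|t| + 1)) := by
              apply mul_le_mul h0 h1 (by positivity) (by positivity)
            apply mul_le_mul hA h2 (norm_nonneg _) (by positivity)
        _ = ((|t| + 1) * ‖N‖) ^ k / (k.factorial : ℝ) * ((|t| + 1) * ‖w‖) := by
            rw [mul_pow]; ring
  -- representation of `t • φ(-tA) w` as a series of vectors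
  have hrep : ∀ t : ℝ,
      t • ((phiMat (-(t • A))).mulVec w) =
        ∑' k : ℕ, ((((k + 1).factorial : ℝ))⁻¹ * t ^ (k + 1)) • u k := by
    intro t
    haveI : FiniteDimensional ℝ ((Fin n → ℝ) →L[ℝ] (Fin n → ℝ)) :=
      (LinearMap.toContinuousLinearMap :
        ((Fin n → ℝ) →ₗ[ℝ] (Fin n → ℝ)) ≃ₗ[ℝ] _).finiteDimensional
    -- summability on the CLM side
    have hclm : Summable fun k : ℕ =>
        ((((k + 1).factorial : ℝ))⁻¹ * t ^ k) • (N ^ k) := by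
      apply Summable.of_norm_bounded
        (g := fun k => (|t| * ‖N‖) ^ k / (k.factorial : ℝ))
      · exact Real.summable_pow_div_factorial _
      · intro k
        calc ‖((((k + 1).factorial : ℝ))⁻¹ * t ^ k) • (N ^ k)‖
            ≤ ‖(((k + 1).factorial : ℝ))⁻¹ * t ^ k‖ * ‖N ^ k‖ :=
              ContinuousLinearMap.opNorm_smul_le _ _
        _ = ((k + 1).factorial : ℝ)⁻¹ * |t| ^ k * ‖N ^ k‖ := by
              rw [Real.norm_eq_abs, abs_mul, abs_inv, abs_pow, Nat.abs_cast]
        _ ≤ ((k.factorial : ℝ))⁻¹ * |t| ^ k * ‖N‖ ^ k := by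
              apply mul_le_mul (mul_le_mul (hfact_le k) (le_refl _) (by positivity)
                (by positivity)) (hNpow k) (norm_nonneg _) (by positivity)
        _ = (|t| * ‖N‖) ^ k / (k.factorial : ℝ) := by rw [mul_pow]; ring
    -- summability on the matrix side
    have hmat : Summable fun k : ℕ =>
        ((((k + 1).factorial : ℝ))⁻¹ * t ^ k) • (-A) ^ k := by
      have := hclm.map clmToMat.toAddMonoidHom clmToMat.continuous_of_finiteDimensional
      refine this.congr fun k => ?_
      simp only [LinearMap.toAddMonoidHom_coe, Function.comp_apply, _root_.map_smul]
      rw [hN, clmToMat_clmOf_pow]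
    have h1 : phiMat (-(t • A)) =
        ∑' k : ℕ, ((((k + 1).factorial : ℝ))⁻¹ * t ^ k) • (-A) ^ k := by
      simp only [phiMat]
      congr 1
      funext k
      rw [show -(t • A) = t • (-A) by rw [smul_neg]]
      rw [smul_pow, smul_smul]
    rw [h1, ← evw_apply w, (evw w).map_tsum hmat, ← tsum_const_smul'' t]
    congr 1
    funext k
    rw [_root_.map_smul, evw_apply, clmOf_pow, ← hN, smul_smul]
    show (t * ((((k + 1).factorial : ℝ))⁻¹ * t ^ k)) • (N ^ k) w = _
    rw [hu]
    congr 1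
    ring
  -- the series representation of y
  have hyS : y = fun s : ℝ => v +
      ∑' k : ℕ, ((((k + 1).factorial : ℝ))⁻¹ * s ^ (k + 1)) • u k := by
    funext s
    rw [hy]
    show v + s • ((phiMat (-(s • A))).mulVec w) = _
    rw [hrep s]
  constructor
  · simp [hy]
  · intro t
    set R : ℝ := |t| + 1 with hR
    have hRpos : (0:ℝ) < R := by positivity
    -- derivative of the series
    have hder : HasDerivAt
        (fun s : ℝ => ∑' k : ℕ, ((((k + 1).factorial : ℝ))⁻¹ * s ^ (k + 1)) • u k)
        (∑' k : ℕ, (((k.factorial : ℝ))⁻¹ * t ^ k) • u k) t := by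
      have hg : ∀ (k : ℕ) (s : ℝ), s ∈ Metric.ball (0:ℝ) R →
          HasDerivAt (fun s : ℝ => ((((k + 1).factorial : ℝ))⁻¹ * s ^ (k + 1)) • u k)
            ((((k.factorial : ℝ))⁻¹ * s ^ k) • u k) s := by
        intro k s _
        have h := ((hasDerivAt_pow (k + 1) s).const_mul
          (((k + 1).factorial : ℝ)⁻¹)).smul_const (u k)
        refine h.congr_deriv ?_
        congr 1
        simp only [Nat.add_sub_cancel, Nat.cast_add, Nat.cast_one]
        rw [Nat.factorial_succ]
        push_cast
        have hk : ((k.factorial : ℝ)) ≠ 0 := by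
          exact_mod_cast (Nat.factorial_pos k).ne'
        field_simp
      have hg' : ∀ (k : ℕ) (s : ℝ), s ∈ Metric.ball (0:ℝ) R →
          ‖((((k.factorial : ℝ))⁻¹ * s ^ k) • u k)‖ ≤
            (R * ‖N‖) ^ k / (k.factorial : ℝ) * ‖w‖ := by
        intro k s hs
        rw [Metric.mem_ball, Real.dist_eq, sub_zero] at hs
        exact hbnd s R (le_of_lt hs) k
      have hg0 : Summable fun k : ℕ =>
          ((((k + 1).factorial : ℝ))⁻¹ * (0:ℝ) ^ (k + 1)) • u k := by
        apply Summable.congr summable_zero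
        intro k
        simp [zero_pow (Nat.succ_ne_zero k)]
      have htmem : t ∈ Metric.ball (0:ℝ) R := by
        rw [Metric.mem_ball, Real.dist_eq, sub_zero]
        simp [hR]
      exact hasDerivAt_tsum_of_isPreconnected (hsumder R) Metric.isOpen_ball
        (convex_ball (0:ℝ) R).isPreconnected (fun k s hs => hg k s hs)
        (fun k s hs => hg' k s hs) (Metric.mem_ball_self hRpos) hg0 htmem
    have hD : HasDerivAt y (∑' k : ℕ, (((k.factorial : ℝ))⁻¹ * t ^ k) • u k) t := by
      rw [hyS]
      exact hder.const_add v
    -- identify the derivative with -A y + g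
    have hyt : y t = v + ∑' k : ℕ, ((((k + 1).factorial : ℝ))⁻¹ * t ^ (k + 1)) • u k := by
      rw [hyS]
    have hAS : A.mulVec (∑' k : ℕ, ((((k + 1).factorial : ℝ))⁻¹ * t ^ (k + 1)) • u k) =
        -∑' k : ℕ, ((((k + 1).factorial : ℝ))⁻¹ * t ^ (k + 1)) • u (k + 1) := by
      rw [← clmOf_apply A, (clmOf A).map_tsum (hsum t), ← tsum_neg]
      congr 1
      funext k
      rw [_root_.map_smul]
      have hterm : clmOf A (u k) = -(u (k + 1)) := by
        rw [hu]
        show A.mulVec ((N ^ k) w) = -((N ^ (k + 1)) w)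
        rw [pow_succ', ContinuousLinearMap.mul_apply]
        rw [hN, clmOf_apply]
        have hAx : ∀ x : Fin n → ℝ, A.mulVec x = -((-A).mulVec x) := by
          intro x; rw [Matrix.neg_mulVec, neg_neg]
        rw [hAx]
      rw [hterm, smul_neg]
    have hsum2 : Summable fun k : ℕ => (((k.factorial : ℝ))⁻¹ * t ^ k) • u k :=
      Summable.of_norm_bounded (hsumder |t|) (fun k => hbnd t |t| (le_refl _) k)
    have hfinal : -(A.mulVec (y t)) + g =
        ∑' k : ℕ, (((k.factorial : ℝ))⁻¹ * t ^ k) • u k := by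
      rw [hyt, Matrix.mulVec_add, hAS, Summable.tsum_eq_zero_add hsum2]
      have h00 : (((Nat.factorial 0 : ℕ) : ℝ))⁻¹ * t ^ 0 = 1 := by
        simp [Nat.factorial_zero]
      have hu0 : u 0 = w := by simp [hu]
      rw [h00, hu0, one_smul, hw]
      abel
    rw [← hfinal] at hD
    exact hD
end

section
/- If A ∈ ℝ^{n×n} satisfies x^T A x ≥ ω x^T x for all x with ω ≥ 0, then for all t ≥ 0 the matrix function φ(−tA) satisfies ‖φ(−tA)‖₂ ≤ φ(−tω), where φ(z) = (e^z − 1)/z for z ≠ 0 and φ(0) = 1. -/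
open Matrix
open scoped Matrix.Norms.L2Operator

/-- The scalar function `φ(z) = (e^z − 1)/z`, `φ(0) = 1`. -/
noncomputable def phiR (z : ℝ) : ℝ := if z = 0 then 1 else (Real.exp z - 1) / z

open MeasureTheory NormedSpace

/-- Norm bound for the matrix exponential of an accretive matrix. -/
lemma exp_opNorm_bound {n : ℕ} (A : Matrix (Fin n) (Fin n) ℝ) (ω : ℝ)
    (hA : ∀ x : Fin n → ℝ, ω * (x ⬝ᵥ x) ≤ x ⬝ᵥ A.mulVec x)
    (s : ℝ) (hs : 0 ≤ s) :
    ‖exp (s • (-A))‖ ≤ Real.exp (-(s * ω)) := by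
  rw [Matrix.l2_opNorm_def]
  apply ContinuousLinearMap.opNorm_le_bound _ (Real.exp_nonneg _)
  intro v
  set B : Matrix (Fin n) (Fin n) ℝ := -A with hB
  let Φ : Matrix (Fin n) (Fin n) ℝ →L[ℝ] EuclideanSpace ℝ (Fin n) :=
    LinearMap.toContinuousLinearMap
      ((LinearMap.applyₗ v).comp (Matrix.toEuclideanLin :
        Matrix (Fin n) (Fin n) ℝ ≃ₗ[ℝ] _).toLinearMap)
  have hΦ : ∀ M : Matrix (Fin n) (Fin n) ℝ, Φ M = Matrix.toEuclideanLin M v := fun _ => rfl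
  set f : ℝ → EuclideanSpace ℝ (Fin n) := fun u => Φ (exp (u • B)) with hf
  set f' : ℝ → EuclideanSpace ℝ (Fin n) := fun u => Φ (B * exp (u • B)) with hf'
  have hderiv : ∀ u : ℝ, HasDerivAt f (f' u) u := by
    intro u
    exact Φ.hasFDerivAt.comp_hasDerivAt u (hasDerivAt_exp_smul_const' B u)
  have key : ∀ u : ℝ, ω * inner ℝ (f u) (f u) + inner ℝ (f' u) (f u) ≤ (0:ℝ) := by
    intro u
    set w : Fin n → ℝ := (exp (u • B)).mulVec (WithLp.equiv 2 _ v) with hw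
    have h1 : inner ℝ (f u) (f u) = w ⬝ᵥ w := by
      simp [hf, hΦ, Matrix.toEuclideanLin_apply, PiLp.inner_apply, dotProduct, hw,
        RCLike.inner_apply]
      rw [EuclideanSpace.norm_sq_eq]; simp [sq]
    have h2 : inner ℝ (f' u) (f u) = (B.mulVec w) ⬝ᵥ w := by
      simp [hf, hf', hΦ, Matrix.toEuclideanLin_apply, PiLp.inner_apply, dotProduct, hw,
        RCLike.inner_apply, Matrix.mulVec_mulVec, mul_comm]
    rw [h1, h2]
    have h3 : (B.mulVec w) ⬝ᵥ w = -(w ⬝ᵥ A.mulVec w) := by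
      rw [hB, Matrix.neg_mulVec, neg_dotProduct, dotProduct_comm]
    rw [h3]
    have := hA w
    linarith
  -- Gronwall-type argument
  have hmain : Real.exp (2 * ω * s) * inner ℝ (f s) (f s) ≤ (inner ℝ (f 0) (f 0) : ℝ) := by
    set g : ℝ → ℝ := fun u => inner ℝ (f u) (f u) with hg
    have hgderiv : ∀ u, HasDerivAt g (inner ℝ (f u) (f' u) + inner ℝ (f' u) (f u)) u :=
      fun u => HasDerivAt.inner ℝ (hderiv u) (hderiv u)
    set h : ℝ → ℝ := fun u => Real.exp (2 * ω * u) * g u with hh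
    have hhderiv : ∀ u, HasDerivAt h (Real.exp (2 * ω * u) * (2 * ω) * g u +
        Real.exp (2 * ω * u) * (inner ℝ (f u) (f' u) + inner ℝ (f' u) (f u))) u := by
      intro u
      have he : HasDerivAt (fun u => Real.exp (2 * ω * u)) (Real.exp (2 * ω * u) * (2 * ω)) u :=
        by simpa using ((hasDerivAt_id u).const_mul (2 * ω)).exp
      exact he.mul (hgderiv u)
    have hanti : Antitone h := by
      apply antitone_of_deriv_nonpos (fun u => (hhderiv u).differentiableAt)
      intro u
      rw [(hhderiv u).deriv]
      have h1 : (inner ℝ (f u) (f' u) : ℝ) = inner ℝ (f' u) (f u) := real_inner_comm _ _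
      have h2 := key u
      have h3 : (0:ℝ) < Real.exp (2 * ω * u) := Real.exp_pos _
      nlinarith [h3]
    have := hanti hs
    simpa [hh, hg] using this
  have hf0 : f 0 = v := by
    simp [hf, hΦ, Matrix.toEuclideanLin_apply]
  show ‖f s‖ ≤ Real.exp (-(s * ω)) * ‖v‖
  have hfs : (inner ℝ (f s) (f s) : ℝ) = ‖f s‖ ^ 2 := real_inner_self_eq_norm_sq _
  have hv : (inner ℝ (f 0) (f 0) : ℝ) = ‖v‖ ^ 2 := by rw [hf0]; exact real_inner_self_eq_norm_sq _
  have hexp1 : Real.exp (2 * ω * s) * (Real.exp (-(s * ω))) ^ 2 = 1 := by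
    rw [sq, ← Real.exp_add, ← Real.exp_add]
    ring_nf
    exact Real.exp_zero
  refine le_of_pow_le_pow_left₀ two_ne_zero (by positivity) ?_
  have h3 : (0:ℝ) < Real.exp (2 * ω * s) := Real.exp_pos _
  nlinarith [hmain, norm_nonneg (f s), norm_nonneg v, sq_nonneg (‖v‖)]

/-- The matrix `φ` function as an integral of the matrix exponential. -/
lemma phiMat_eq_integral {n : ℕ} (M : Matrix (Fin n) (Fin n) ℝ) :
    phiMat M = ∫ s in Set.Ioc (0:ℝ) 1, exp (s • M) := by
  set F : ℕ → ℝ → Matrix (Fin n) (Fin n) ℝ :=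
    fun k s => (s ^ k * ((k.factorial : ℝ))⁻¹) • M ^ k with hF
  have hcont : ∀ k, Continuous (F k) := fun k =>
    ((continuous_pow k).mul continuous_const).smul continuous_const
  have hF_int : ∀ k, Integrable (F k) (volume.restrict (Set.Ioc (0:ℝ) 1)) := fun k =>
    (hcont k).integrableOn_Ioc
  set C : ℝ := max ‖(1 : Matrix (Fin n) (Fin n) ℝ)‖ 1 with hC
  have hC1 : (1:ℝ) ≤ C := le_max_right _ _
  have hpow : ∀ k : ℕ, ‖M ^ k‖ ≤ C * ‖M‖ ^ k := by
    intro k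
    rcases Nat.eq_zero_or_pos k with rfl | hk
    · rw [pow_zero, pow_zero, mul_one]; exact le_max_left _ _
    · calc ‖M ^ k‖ ≤ ‖M‖ ^ k := norm_pow_le' M hk
        _ ≤ C * ‖M‖ ^ k := by nlinarith [pow_nonneg (norm_nonneg M) k]
  have hF_sum : Summable fun k => ∫ s in Set.Ioc (0:ℝ) 1, ‖F k s‖ := by
    apply Summable.of_nonneg_of_le
      (fun k => integral_nonneg (fun s => norm_nonneg _))
      (fun k => ?_) ((Real.summable_pow_div_factorial ‖M‖).mul_left C)
    have hb : ∀ s ∈ Set.Ioc (0:ℝ) 1, ‖F k s‖ ≤ C * (‖M‖ ^ k / k.factorial) := by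
      intro s hs
      rw [hF]
      simp only [norm_smul, Real.norm_eq_abs]
      have h1 : |s ^ k * ((k.factorial : ℝ))⁻¹| ≤ ((k.factorial : ℝ))⁻¹ := by
        rw [abs_mul, abs_pow, abs_of_pos hs.1, abs_of_nonneg (by positivity)]
        have : s ^ k ≤ 1 := pow_le_one₀ hs.1.le hs.2
        nlinarith [inv_nonneg.2 (Nat.cast_nonneg k.factorial : (0:ℝ) ≤ k.factorial)]
      calc |s ^ k * ((k.factorial : ℝ))⁻¹| * ‖M ^ k‖
          ≤ ((k.factorial : ℝ))⁻¹ * (C * ‖M‖ ^ k) := by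
            apply mul_le_mul h1 (hpow k) (norm_nonneg _) (by positivity)
        _ = C * (‖M‖ ^ k / k.factorial) := by ring
    calc (∫ s in Set.Ioc (0:ℝ) 1, ‖F k s‖)
        ≤ ∫ _ in Set.Ioc (0:ℝ) 1, C * (‖M‖ ^ k / k.factorial) :=
          setIntegral_mono_on ((hcont k).norm.integrableOn_Ioc)
            (integrableOn_const (by simp)) measurableSet_Ioc hb
      _ = C * (‖M‖ ^ k / k.factorial) := by simp
  have hpt : ∀ s : ℝ, (∑' k, F k s) = exp (s • M) := by
    intro s
    rw [exp_eq_tsum (𝕂 := ℝ)]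
    congr 1
    funext k
    rw [hF, smul_pow, smul_smul, mul_comm]
  have hswap := integral_tsum_of_summable_integral_norm hF_int hF_sum
  have hterm : ∀ k : ℕ, (∫ s in Set.Ioc (0:ℝ) 1, F k s)
      = (((k + 1).factorial : ℝ))⁻¹ • M ^ k := by
    intro k
    rw [hF]
    simp only
    rw [integral_smul_const]
    congr 1
    rw [← intervalIntegral.integral_of_le zero_le_one]
    rw [intervalIntegral.integral_mul_const, integral_pow]
    rw [Nat.factorial_succ]
    push_cast
    have h1 : (k.factorial : ℝ) ≠ 0 := Nat.cast_ne_zero.2 k.factorial_ne_zero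
    have h2 : ((k:ℝ) + 1) ≠ 0 := by positivity
    field_simp
    simp
  calc phiMat M = ∑' k : ℕ, (∫ s in Set.Ioc (0:ℝ) 1, F k s) := by
        rw [phiMat]; exact tsum_congr fun k => (hterm k).symm
    _ = ∫ s in Set.Ioc (0:ℝ) 1, (∑' k, F k s) := hswap
    _ = ∫ s in Set.Ioc (0:ℝ) 1, exp (s • M) := by
        apply setIntegral_congr_fun measurableSet_Ioc
        intro s _
        exact hpt s

lemma integral_exp_neg_mul (c : ℝ) (hc : 0 < c) :
    ∫ s in Set.Ioc (0:ℝ) 1, Real.exp (-(s * c)) = (1 - Real.exp (-c)) / c := by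
  rw [← intervalIntegral.integral_of_le zero_le_one]
  have h : ∀ s ∈ Set.uIcc (0:ℝ) 1,
      HasDerivAt (fun u => -(c⁻¹) * Real.exp (-(u * c))) (Real.exp (-(s * c))) s := by
    intro s _
    have h1 : HasDerivAt (fun u : ℝ => -(u * c)) (-c) s := by
      exact ((hasDerivAt_id' s).mul_const c).neg.congr_deriv (by ring)
    have h2 := h1.exp.const_mul (-(c⁻¹))
    exact h2.congr_deriv (by field_simp [hc.ne'])
  rw [intervalIntegral.integral_eq_sub_of_hasDerivAt h
    ((Real.continuous_exp.comp (by continuity)).intervalIntegrable 0 1)]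
  field_simp
  simp only [mul_zero, neg_zero, Real.exp_zero]
  ring

/-- If `xᵀAx ≥ ω xᵀx` for all `x`, with `ω ≥ 0`, then `‖φ(−tA)‖₂ ≤ φ(−tω)` for `t ≥ 0`. -/
theorem phi_norm_bound {n : ℕ} (A : Matrix (Fin n) (Fin n) ℝ) (ω : ℝ) (hω : 0 ≤ ω)
    (hA : ∀ x : Fin n → ℝ, ω * (x ⬝ᵥ x) ≤ x ⬝ᵥ A.mulVec x) :
    ∀ t : ℝ, 0 ≤ t → ‖phiMat (-(t • A))‖ ≤ phiR (-(t * ω)) := by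
  intro t ht
  have hA' : ∀ x : Fin n → ℝ, (t * ω) * (x ⬝ᵥ x) ≤ x ⬝ᵥ (t • A).mulVec x := by
    intro x
    rw [Matrix.smul_mulVec, dotProduct_smul, smul_eq_mul]
    calc t * ω * (x ⬝ᵥ x) = t * (ω * (x ⬝ᵥ x)) := by ring
      _ ≤ t * (x ⬝ᵥ A.mulVec x) := mul_le_mul_of_nonneg_left (hA x) ht
  have hbound : ∀ s ∈ Set.Ioc (0:ℝ) 1,
      ‖exp (s • (-(t • A)))‖ ≤ Real.exp (-(s * (t * ω))) :=
    fun s hs => exp_opNorm_bound (t • A) (t * ω) hA' s hs.1.le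
  rw [phiMat_eq_integral]
  calc ‖∫ s in Set.Ioc (0:ℝ) 1, exp (s • (-(t • A)))‖
      ≤ ∫ s in Set.Ioc (0:ℝ) 1, ‖exp (s • (-(t • A)))‖ := norm_integral_le_integral_norm _
    _ ≤ ∫ s in Set.Ioc (0:ℝ) 1, Real.exp (-(s * (t * ω))) :=
        setIntegral_mono_on
          ((differentiable_exp_smul_const ℝ (-(t • A))).continuous.norm.integrableOn_Ioc)
          ((Real.continuous_exp.comp (by continuity)).integrableOn_Ioc)
          measurableSet_Ioc hbound
    _ = phiR (-(t * ω)) := by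
        rcases eq_or_lt_of_le (mul_nonneg ht hω) with h0 | h0
        · simp [← h0, phiR]
        · rw [integral_exp_neg_mul _ h0, phiR, if_neg (by simp [ne_of_gt h0] : ¬(-(t*ω) = 0))]
          rw [div_eq_div_iff (ne_of_gt h0) (by simpa using (ne_of_gt h0))]
          ring
end

section
/- Let ε(t) = y(t) − y_k(t) where y solves y' = −Ay + g, y(0) = v, and y_k is differentiable with y_k(0) = v and residual r_k(t) = −A y_k(t) + g − y_k'(t). Then ε solves ε'(t) = −A ε(t) + r_k(t) with ε(0) = 0, and consequently, if x^T A x ≥ ω‖x‖² for all x with ω ≥ 0, then ‖ε(t)‖ ≤ t φ(−tω) · max_{s∈[0,t]} ‖r_k(s)‖ for t ≥ 0. -/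
open Matrix
open scoped RealInnerProductSpace

/-- The error `ε = y − y_k` satisfies `ε' = −Aε + r_k`, `ε(0) = 0`, and hence
`‖ε(t)‖ ≤ t φ(−tω) max_{s∈[0,t]} ‖r_k(s)‖`. -/
theorem error_ode_and_bound {n : ℕ} (A : Matrix (Fin n) (Fin n) ℝ) (ω : ℝ) (hω : 0 ≤ ω)
    (hA : ∀ x : EuclideanSpace ℝ (Fin n),
      ω * ‖x‖ ^ 2 ≤ ⟪x, Matrix.toEuclideanCLM (𝕜 := ℝ) A x⟫)
    (g v : EuclideanSpace ℝ (Fin n))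
    (y yk : ℝ → EuclideanSpace ℝ (Fin n)) (yk' : ℝ → EuclideanSpace ℝ (Fin n))
    (hy : ∀ t, HasDerivAt y (-(Matrix.toEuclideanCLM (𝕜 := ℝ) A (y t)) + g) t)
    (hy0 : y 0 = v)
    (hyk : ∀ t, HasDerivAt yk (yk' t) t) (hyk0 : yk 0 = v)
    (hyk'c : Continuous yk')
    (r : ℝ → EuclideanSpace ℝ (Fin n))
    (hr : r = fun t => -(Matrix.toEuclideanCLM (𝕜 := ℝ) A (yk t)) + g - yk' t)
    (ε : ℝ → EuclideanSpace ℝ (Fin n)) (hε : ε = fun t => y t - yk t) :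
    (∀ t, HasDerivAt ε (-(Matrix.toEuclideanCLM (𝕜 := ℝ) A (ε t)) + r t) t) ∧
    ε 0 = 0 ∧
    ∀ t : ℝ, 0 ≤ t →
      ‖ε t‖ ≤ t * phiR (-(t * ω)) * sSup ((fun s => ‖r s‖) '' Set.Icc 0 t) := by
  set T := Matrix.toEuclideanCLM (𝕜 := ℝ) A with hT
  -- derivative of ε
  have hε' : ∀ t, HasDerivAt ε (-(T (ε t)) + r t) t := by
    intro t
    have h := (hy t).sub (hyk t)
    have : -(T (ε t)) + r t = (-(T (y t)) + g) - yk' t := by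
      subst hε hr
      simp only [map_sub]
      abel
    rw [this, hε]
    exact h
  have hε0 : ε 0 = 0 := by simp [hε, hy0, hyk0]
  refine ⟨hε', hε0, ?_⟩
  intro t ht
  -- continuity facts
  have hεc : Continuous ε := by
    refine continuous_iff_continuousAt.2 fun s => (hε' s).continuousAt
  have hykc : Continuous yk := continuous_iff_continuousAt.2 fun s => (hyk s).continuousAt
  have hrc : Continuous r := by
    rw [hr]
    exact ((T.continuous.comp hykc).neg.add continuous_const).sub hyk'c
  set M := sSup ((fun s => ‖r s‖) '' Set.Icc 0 t) with hM
  have hbdd : BddAbove ((fun s => ‖r s‖) '' Set.Icc 0 t) :=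
    (isCompact_Icc.image (continuous_norm.comp hrc)).bddAbove
  have hMle : ∀ s ∈ Set.Icc (0:ℝ) t, ‖r s‖ ≤ M := fun s hs =>
    le_csSup hbdd ⟨s, hs, rfl⟩
  -- Gronwall
  have key : ∀ x ∈ Set.Icc (0:ℝ) t, ‖ε x‖ ≤ gronwallBound 0 (-ω) M (x - 0) := by
    refine le_gronwallBound_of_liminf_deriv_right_le
      (f := fun s => ‖ε s‖) (f' := fun s => -ω * ‖ε s‖ + ‖r s‖)
      (continuous_norm.comp hεc).continuousOn ?_ (by simp [hε0]) ?_
    · -- liminf condition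
      intro x hx ρ hρ
      -- the slope of ‖ε ·‖ at x tends (from the right) to a limit L ≤ f' x
      have hD := hε' x
      set D := -(T (ε x)) + r x with hD'
      have hL : ∃ L : ℝ, L ≤ -ω * ‖ε x‖ + ‖r x‖ ∧
          Filter.Tendsto (fun z => (z - x)⁻¹ * (‖ε z‖ - ‖ε x‖)) (nhdsWithin x (Set.Ioi x))
            (nhds L) := by
        by_cases h0 : ε x = 0
        · refine ⟨‖D‖, ?_, ?_⟩
          · have : D = r x := by rw [hD', h0]; simp
            rw [this, h0]; simp
          · have hslope := hasDerivAt_iff_tendsto_slope.1 hD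
            have hslope' : Filter.Tendsto (fun z => ‖slope ε x z‖)
                (nhdsWithin x (Set.Ioi x)) (nhds ‖D‖) := by
              exact (continuous_norm.continuousAt.tendsto.comp
                (hslope.mono_left (nhdsWithin_mono x fun z hz => ne_of_gt hz)))
            refine hslope'.congr' ?_
            filter_upwards [self_mem_nhdsWithin] with z hz
            have hzx : (0:ℝ) < z - x := sub_pos.2 hz
            rw [slope_def_module, norm_smul, Real.norm_eq_abs, abs_of_pos (by positivity)]
            rw [h0]
            simp
        · -- ε x ≠ 0 : norm is differentiable
          have hq : HasDerivAt (fun s => ⟪ε s, ε s⟫) (⟪ε x, D⟫ + ⟪D, ε x⟫) x :=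
            HasDerivAt.inner ℝ hD hD
          have hqx : ⟪ε x, ε x⟫ ≠ 0 := by
            rw [real_inner_self_eq_norm_sq]
            have : ‖ε x‖ ≠ 0 := norm_ne_zero_iff.2 h0
            positivity
          have hsq : HasDerivAt (fun s => Real.sqrt ⟪ε s, ε s⟫)
              ((⟪ε x, D⟫ + ⟪D, ε x⟫) / (2 * Real.sqrt ⟪ε x, ε x⟫)) x := hq.sqrt hqx
          have hnorm_eq : (fun s => Real.sqrt ⟪ε s, ε s⟫) = fun s => ‖ε s‖ := by
            funext s
            rw [real_inner_self_eq_norm_sq, Real.sqrt_sq (norm_nonneg _)]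
          rw [hnorm_eq] at hsq
          refine ⟨(⟪ε x, D⟫ + ⟪D, ε x⟫) / (2 * Real.sqrt ⟪ε x, ε x⟫), ?_, ?_⟩
          · -- derivative value ≤ -ω‖ε x‖ + ‖r x‖
            have hsqrt : Real.sqrt ⟪ε x, ε x⟫ = ‖ε x‖ := by
              rw [real_inner_self_eq_norm_sq, Real.sqrt_sq (norm_nonneg _)]
            rw [hsqrt]
            have hpos : (0:ℝ) < ‖ε x‖ := norm_pos_iff.2 h0
            rw [div_le_iff₀ (by positivity)]
            have h1 : ⟪ε x, D⟫ + ⟪D, ε x⟫ = 2 * (-⟪ε x, T (ε x)⟫ + ⟪ε x, r x⟫) := by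
              rw [real_inner_comm (ε x) D, hD']
              simp only [inner_add_left, inner_neg_left, inner_add_right, inner_neg_right]
              ring
            rw [h1]
            have h2 : ⟪ε x, T (ε x)⟫ ≥ ω * ‖ε x‖ ^ 2 := hA (ε x)
            have h3 : ⟪ε x, r x⟫ ≤ ‖ε x‖ * ‖r x‖ := real_inner_le_norm _ _
            nlinarith [norm_nonneg (r x), norm_nonneg (ε x)]
          · have hslope := hasDerivAt_iff_tendsto_slope.1 hsq
            refine (hslope.mono_left (nhdsWithin_mono x fun z hz => ne_of_gt hz)).congr' ?_
            filter_upwards [self_mem_nhdsWithin] with z hz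
            rw [slope_def_field]
            rw [div_eq_inv_mul]
      obtain ⟨L, hLle, hLt⟩ := hL
      have : ∀ᶠ z in nhdsWithin x (Set.Ioi x), (z - x)⁻¹ * (‖ε z‖ - ‖ε x‖) < ρ :=
        hLt.eventually (Filter.Tendsto.eventually_lt_const (lt_of_le_of_lt hLle hρ) Filter.tendsto_id)
      exact this.frequently
    · intro x hx
      have := hMle x ⟨hx.1, le_of_lt hx.2⟩
      show -ω * ‖ε x‖ + ‖r x‖ ≤ -ω * ‖ε x‖ + M
      linarith
  have hfin := key t ⟨le_refl 0 |>.trans ht, le_refl t⟩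
  rw [sub_zero] at hfin
  refine hfin.trans (le_of_eq ?_)
  -- gronwallBound 0 (-ω) M t = t * phiR (-(t*ω)) * M
  rcases eq_or_lt_of_le hω with hω0 | hωpos
  · rw [← hω0]
    simp [gronwallBound_K0, phiR]
    ring
  · rcases eq_or_lt_of_le ht with ht0 | htpos
    · rw [← ht0]
      simp [gronwallBound_x0]
    · have hK : (-ω) ≠ 0 := by linarith
      have htω : -(t * ω) ≠ 0 := by
        have : 0 < t * ω := mul_pos htpos hωpos
        linarith
      rw [gronwallBound_of_K_ne_0 hK, phiR, if_neg htω]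
      field_simp
      ring_nf
end

section
/- For any real c > 0 and t ≥ 0, the function g(x) = (1 − e^{−ct} e^{−ctx})/(c(x+1)) on [−1,1] has Chebyshev coefficients satisfying a_m[g] = (4/c)(−1)^m Σ_{l=0}^{∞} (l+1) e^{−ct} I_{m+l+1}(ct), where I_ν is the modified Bessel function of the first kind and a_m[h] denotes the m-th Chebyshev coefficient of h. -/
open Real

/-- Modified Bessel function of the first kind of integer order:
`I_ν(w) = (1/π) ∫_0^π e^{w cos θ} cos(ν θ) dθ`. -/
noncomputable def besselI (ν : ℕ) (w : ℝ) : ℝ :=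
  (1 / Real.pi) * ∫ θ in (0:ℝ)..Real.pi, Real.exp (w * Real.cos θ) * Real.cos (ν * θ)

/-- The `m`-th Chebyshev coefficient `a_m[h] = (2/π)∫_{−1}^1 h(x) T_m(x)/√(1−x²) dx`. -/
noncomputable def chebCoeff (h : ℝ → ℝ) (m : ℕ) : ℝ :=
  (2 / Real.pi) *
    ∫ x in (-1:ℝ)..1, h x * (Polynomial.Chebyshev.T ℝ m).eval x / Real.sqrt (1 - x ^ 2)

open MeasureTheory Set Filter Topology

lemma cos_image_Ioo : Real.cos '' Set.Ioo 0 π = Set.Ioo (-1 : ℝ) 1 := by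
  ext y
  constructor
  · rintro ⟨θ, hθ, rfl⟩
    constructor
    · have := Real.strictAntiOn_cos ⟨hθ.1.le, hθ.2.le⟩ ⟨Real.pi_pos.le, le_refl π⟩ hθ.2
      simpa [Real.cos_pi] using this
    · have := Real.strictAntiOn_cos ⟨le_refl 0, Real.pi_pos.le⟩ ⟨hθ.1.le, hθ.2.le⟩ hθ.1
      simpa [Real.cos_zero] using this
  · intro hy
    refine ⟨Real.arccos y, ⟨Real.arccos_pos.2 hy.2, ?_⟩, Real.cos_arccos hy.1.le hy.2.le⟩
    refine (Real.arccos_le_pi y).lt_of_ne ?_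
    intro h
    have : y = -1 := by
      have := Real.cos_arccos hy.1.le hy.2.le
      rw [h, Real.cos_pi] at this
      linarith
    linarith [hy.1]

lemma integral_cos_sub (h : ℝ → ℝ) :
    (∫ x in (-1:ℝ)..1, h x / Real.sqrt (1 - x ^ 2)) = ∫ θ in (0:ℝ)..π, h (Real.cos θ) := by
  rw [intervalIntegral.integral_of_le (by norm_num : (-1:ℝ) ≤ 1),
      intervalIntegral.integral_of_le Real.pi_pos.le,
      MeasureTheory.integral_Ioc_eq_integral_Ioo, MeasureTheory.integral_Ioc_eq_integral_Ioo,
      ← cos_image_Ioo,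
      integral_image_eq_integral_abs_deriv_smul measurableSet_Ioo
        (fun θ _ => (Real.hasDerivAt_cos θ).hasDerivWithinAt)
        (Real.injOn_cos.mono Set.Ioo_subset_Icc_self) (fun x => h x / Real.sqrt (1 - x ^ 2))]
  apply MeasureTheory.setIntegral_congr_fun measurableSet_Ioo
  intro θ hθ
  have hs : 0 < Real.sin θ := Real.sin_pos_of_pos_of_lt_pi hθ.1 hθ.2
  have h2 : Real.sqrt (1 - Real.cos θ ^ 2) = Real.sin θ := by
    rw [show (1 : ℝ) - Real.cos θ ^ 2 = Real.sin θ ^ 2 by rw [Real.sin_sq]]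
    exact Real.sqrt_sq hs.le
  show |(-Real.sin θ)| • (h (Real.cos θ) / Real.sqrt (1 - Real.cos θ ^ 2)) = h (Real.cos θ)
  rw [h2, abs_neg, abs_of_pos hs, smul_eq_mul]
  field_simp

lemma chebCoeff_eq (h : ℝ → ℝ) (m : ℕ) :
    chebCoeff h m = (2 / π) * ∫ θ in (0:ℝ)..π, h (Real.cos θ) * Real.cos (m * θ) := by
  unfold chebCoeff
  rw [show (∫ x in (-1:ℝ)..1, h x * (Polynomial.Chebyshev.T ℝ m).eval x / Real.sqrt (1 - x ^ 2))
      = ∫ x in (-1:ℝ)..1, (fun x => h x * (Polynomial.Chebyshev.T ℝ m).eval x) x / Real.sqrt (1 - x ^ 2) from rfl,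
    integral_cos_sub]
  congr 1
  apply intervalIntegral.integral_congr
  intro θ _
  simp only [Polynomial.Chebyshev.T_real_cos]
  push_cast
  ring

lemma flip_integral (f : ℝ → ℝ) (m : ℕ) :
    (∫ θ in (0:ℝ)..π, f (Real.cos θ) * Real.cos (m * θ))
      = (-1:ℝ)^m * ∫ θ in (0:ℝ)..π, f (-Real.cos θ) * Real.cos (m * θ) := by
  have h := intervalIntegral.integral_comp_sub_left (a := 0) (b := π)
    (fun θ => f (Real.cos θ) * Real.cos (m * θ)) π
  rw [sub_self, sub_zero] at h
  rw [← h, ← intervalIntegral.integral_const_mul]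
  apply intervalIntegral.integral_congr
  intro θ _
  simp only
  rw [Real.cos_pi_sub, show (m:ℝ) * (π - θ) = m * π - m * θ by ring,
    Real.cos_nat_mul_pi_sub]
  ring

lemma besselI_integrand_cont (c w : ℝ) :
    Continuous fun θ : ℝ => Real.exp (w * Real.cos θ) * Real.cos (c * θ) := by
  fun_prop

lemma abs_besselI_le (k : ℕ) (w : ℝ) : |besselI k w| ≤ Real.exp |w| := by
  have hb : ∀ θ ∈ Set.uIoc (0:ℝ) π,
      ‖Real.exp (w * Real.cos θ) * Real.cos ((k:ℝ) * θ)‖ ≤ Real.exp |w| := by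
    intro θ _
    rw [norm_mul, Real.norm_eq_abs, Real.norm_eq_abs, Real.abs_exp]
    calc Real.exp (w * Real.cos θ) * |Real.cos ((k:ℝ) * θ)|
        ≤ Real.exp (w * Real.cos θ) * 1 := by
          gcongr
          exact Real.abs_cos_le_one _
      _ ≤ Real.exp |w| := by
          rw [mul_one]
          apply Real.exp_le_exp.2
          calc w * Real.cos θ ≤ |w * Real.cos θ| := le_abs_self _
            _ = |w| * |Real.cos θ| := abs_mul _ _
            _ ≤ |w| * 1 := by gcongr; exact Real.abs_cos_le_one _
            _ = |w| := mul_one _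
  have h := intervalIntegral.norm_integral_le_of_norm_le_const hb
  unfold besselI
  rw [abs_mul, abs_of_nonneg (by positivity : (0:ℝ) ≤ 1/π)]
  calc 1/π * |∫ θ in (0:ℝ)..π, Real.exp (w * Real.cos θ) * Real.cos ((k:ℝ) * θ)|
      ≤ 1/π * (Real.exp |w| * |π - 0|) := by
        gcongr
        exact h
    _ = Real.exp |w| := by
        rw [sub_zero, abs_of_pos Real.pi_pos]
        field_simp

lemma besselI_rec (k : ℕ) (hk : 1 ≤ k) (w : ℝ) :
    besselI k w = w / (2*k) * (besselI (k-1) w - besselI (k+1) w) := by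
  have hk0 : ((k:ℝ)) ≠ 0 := by positivity
  -- integration by parts
  have hu : ∀ θ : ℝ, HasDerivAt (fun θ => Real.exp (w * Real.cos θ))
      (Real.exp (w * Real.cos θ) * (w * -Real.sin θ)) θ :=
    fun θ => ((Real.hasDerivAt_cos θ).const_mul w).exp
  have hv : ∀ θ : ℝ, HasDerivAt (fun θ => Real.sin ((k:ℝ) * θ) / k)
      (Real.cos ((k:ℝ) * θ)) θ := by
    intro θ
    have h1 : HasDerivAt (fun θ : ℝ => Real.sin ((k:ℝ) * θ))
        (Real.cos ((k:ℝ) * θ) * ((k:ℝ) * 1)) θ :=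
      (Real.hasDerivAt_sin ((k:ℝ) * θ)).comp θ ((hasDerivAt_id θ).const_mul (k:ℝ))
    have h2 := h1.div_const (k:ℝ)
    refine h2.congr_deriv ?_
    rw [mul_one, mul_div_cancel_right₀ _ hk0]
  have hparts := intervalIntegral.integral_mul_deriv_eq_deriv_mul
    (u := fun θ => Real.exp (w * Real.cos θ))
    (v := fun θ => Real.sin ((k:ℝ) * θ) / k)
    (u' := fun θ => Real.exp (w * Real.cos θ) * (w * -Real.sin θ))
    (v' := fun θ => Real.cos ((k:ℝ) * θ))
    (a := 0) (b := π)
    (fun θ _ => hu θ) (fun θ _ => hv θ)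
    (Continuous.intervalIntegrable (by fun_prop) _ _)
    (Continuous.intervalIntegrable (by fun_prop) _ _)
  simp only [Real.sin_nat_mul_pi, mul_zero, Real.sin_zero, zero_div, zero_mul, mul_zero,
    sub_zero, zero_sub] at hparts
  -- hparts : ∫ exp(w cos θ) cos(kθ) = -(0) - ∫ u' * v  roughly; massage
  have step1 : (∫ θ in (0:ℝ)..π, Real.exp (w * Real.cos θ) * Real.cos ((k:ℝ) * θ))
      = ∫ θ in (0:ℝ)..π, (w/k) * (Real.exp (w * Real.cos θ) *
          ((Real.cos (((k:ℝ)-1) * θ) - Real.cos (((k:ℝ)+1) * θ))/2)) := by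
    rw [hparts, ← intervalIntegral.integral_neg]
    apply intervalIntegral.integral_congr
    intro θ _
    have htrig : Real.sin θ * Real.sin ((k:ℝ) * θ)
        = (Real.cos (((k:ℝ)-1) * θ) - Real.cos (((k:ℝ)+1) * θ))/2 := by
      rw [show ((k:ℝ)-1) * θ = (k:ℝ)*θ - θ by ring, show ((k:ℝ)+1) * θ = (k:ℝ)*θ + θ by ring,
        Real.cos_sub, Real.cos_add]
      ring
    simp only
    rw [← htrig]
    field_simp
  have hsplit : (∫ θ in (0:ℝ)..π, (w/k) * (Real.exp (w * Real.cos θ) *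
          ((Real.cos (((k:ℝ)-1) * θ) - Real.cos (((k:ℝ)+1) * θ))/2)))
      = (w/(2*k)) * ((∫ θ in (0:ℝ)..π, Real.exp (w * Real.cos θ) * Real.cos (((k:ℝ)-1) * θ))
          - ∫ θ in (0:ℝ)..π, Real.exp (w * Real.cos θ) * Real.cos (((k:ℝ)+1) * θ)) := by
    rw [← intervalIntegral.integral_sub
      (Continuous.intervalIntegrable (by fun_prop) _ _)
      (Continuous.intervalIntegrable (by fun_prop) _ _),
      ← intervalIntegral.integral_const_mul]
    apply intervalIntegral.integral_congr
    intro θ _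
    field_simp
  have hcast1 : (((k-1 : ℕ)):ℝ) = (k:ℝ) - 1 := by
    push_cast [Nat.cast_sub hk]
    ring
  have hcast2 : (((k+1 : ℕ)):ℝ) = (k:ℝ) + 1 := by push_cast; ring
  unfold besselI
  rw [hcast1, hcast2, step1, hsplit]
  ring

lemma abs_besselI_le1 (k : ℕ) (hk : 1 ≤ k) (w : ℝ) :
    |besselI k w| ≤ |w| * Real.exp |w| / k := by
  have hk0 : (0:ℝ) < (k:ℝ) := by exact_mod_cast hk
  rw [besselI_rec k hk w, abs_mul, abs_div, abs_of_pos (by positivity : (0:ℝ) < 2*(k:ℝ))]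
  calc |w| / (2*(k:ℝ)) * |besselI (k-1) w - besselI (k+1) w|
      ≤ |w| / (2*(k:ℝ)) * (Real.exp |w| + Real.exp |w|) := by
        gcongr
        exact (abs_sub _ _).trans (add_le_add (abs_besselI_le _ _) (abs_besselI_le _ _))
    _ = |w| * Real.exp |w| / k := by field_simp; ring

lemma abs_besselI_le2 (k : ℕ) (hk : 2 ≤ k) (w : ℝ) :
    |besselI k w| ≤ |w|^2 * Real.exp |w| / ((k:ℝ) * ((k:ℝ)-1)) := by
  have hk0 : (2:ℝ) ≤ (k:ℝ) := by exact_mod_cast hk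
  have hcast1 : (((k-1 : ℕ)):ℝ) = (k:ℝ) - 1 := by
    push_cast [Nat.cast_sub (by omega : 1 ≤ k)]; ring
  have h1 : |besselI (k-1) w| ≤ |w| * Real.exp |w| / ((k:ℝ)-1) := by
    have := abs_besselI_le1 (k-1) (by omega) w
    rwa [hcast1] at this
  have h2 : |besselI (k+1) w| ≤ |w| * Real.exp |w| / ((k:ℝ)-1) := by
    refine (abs_besselI_le1 (k+1) (by omega) w).trans ?_
    have hc2 : ((k+1:ℕ):ℝ) = (k:ℝ) + 1 := by push_cast; ring
    rw [hc2]
    gcongr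
    all_goals nlinarith
  rw [besselI_rec k (by omega) w, abs_mul, abs_div,
    abs_of_pos (by positivity : (0:ℝ) < 2*(k:ℝ))]
  calc |w| / (2*(k:ℝ)) * |besselI (k-1) w - besselI (k+1) w|
      ≤ |w| / (2*(k:ℝ)) * (|w| * Real.exp |w| / ((k:ℝ)-1) + |w| * Real.exp |w| / ((k:ℝ)-1)) := by
        gcongr
        exact (abs_sub _ _).trans (add_le_add h1 h2)
    _ = |w|^2 * Real.exp |w| / ((k:ℝ) * ((k:ℝ)-1)) := by
        have hA : ((k:ℝ)) ≠ 0 := by positivity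
        have hB : ((k:ℝ)-1) ≠ 0 := ne_of_gt (by linarith)
        rw [pow_two]
        field_simp
        ring

lemma abs_besselI_le3 (k : ℕ) (hk : 3 ≤ k) (w : ℝ) :
    |besselI k w| ≤ |w|^3 * Real.exp |w| / ((k:ℝ) * ((k:ℝ)-1) * ((k:ℝ)-2)) := by
  have hk0 : (3:ℝ) ≤ (k:ℝ) := by exact_mod_cast hk
  have hcast1 : (((k-1 : ℕ)):ℝ) = (k:ℝ) - 1 := by
    push_cast [Nat.cast_sub (by omega : 1 ≤ k)]; ring
  have h1 : |besselI (k-1) w| ≤ |w|^2 * Real.exp |w| / (((k:ℝ)-1) * ((k:ℝ)-2)) := by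
    have := abs_besselI_le2 (k-1) (by omega) w
    rw [hcast1] at this
    convert this using 3
    ring
  have h2 : |besselI (k+1) w| ≤ |w|^2 * Real.exp |w| / (((k:ℝ)-1) * ((k:ℝ)-2)) := by
    refine (abs_besselI_le2 (k+1) (by omega) w).trans ?_
    have hc2 : ((k+1:ℕ):ℝ) = (k:ℝ) + 1 := by push_cast; ring
    rw [hc2]
    gcongr
    all_goals nlinarith
  rw [besselI_rec k (by omega) w, abs_mul, abs_div,
    abs_of_pos (by positivity : (0:ℝ) < 2*(k:ℝ))]
  calc |w| / (2*(k:ℝ)) * |besselI (k-1) w - besselI (k+1) w|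
      ≤ |w| / (2*(k:ℝ)) * (|w|^2 * Real.exp |w| / (((k:ℝ)-1) * ((k:ℝ)-2))
          + |w|^2 * Real.exp |w| / (((k:ℝ)-1) * ((k:ℝ)-2))) := by
        gcongr
        exact (abs_sub _ _).trans (add_le_add h1 h2)
    _ = |w|^3 * Real.exp |w| / ((k:ℝ) * ((k:ℝ)-1) * ((k:ℝ)-2)) := by
        have hne1 : ((k:ℝ)-1) ≠ 0 := by linarith
        have hne2 : ((k:ℝ)-2) ≠ 0 := by linarith
        have hne : ((k:ℝ)) ≠ 0 := by linarith
        have habs3 : |w|^3 = |w| * w^2 := by rw [← sq_abs]; ring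
        field_simp
        rw [habs3]
        ring

lemma abs_besselI_le' (k : ℕ) (w : ℝ) :
    |besselI k w| ≤ 64 * (1+|w|)^3 * Real.exp |w| / ((k:ℝ)+1)^3 := by
  have hw : (0:ℝ) ≤ |w| := abs_nonneg w
  have he : (0:ℝ) < Real.exp |w| := Real.exp_pos _
  rcases lt_or_ge k 3 with h | h
  · have hk3 : ((k:ℝ)) ≤ 2 := by exact_mod_cast Nat.lt_succ_iff.mp h
    have hk0 : (0:ℝ) ≤ (k:ℝ) := Nat.cast_nonneg k
    refine (abs_besselI_le k w).trans ?_
    rw [le_div_iff₀ (by positivity)]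
    have h3 : ((k:ℝ)+1)^3 ≤ 27 := by nlinarith [hk3, hk0, sq_nonneg ((k:ℝ)+1)]
    have h4 : (1:ℝ) ≤ (1+|w|)^3 := by nlinarith [hw, sq_nonneg |w|]
    calc Real.exp |w| * ((k:ℝ)+1)^3 ≤ Real.exp |w| * 27 := by nlinarith
      _ ≤ 64*(1+|w|)^3*Real.exp |w| := by nlinarith [mul_le_mul_of_nonneg_left h4 he.le]
  · have hk3 : (3:ℝ) ≤ (k:ℝ) := by exact_mod_cast h
    refine (abs_besselI_le3 k h w).trans ?_
    have hd : (0:ℝ) < (k:ℝ) * ((k:ℝ)-1) * ((k:ℝ)-2) :=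
      mul_pos (mul_pos (by linarith) (by linarith)) (by linarith)
    rw [div_le_div_iff₀ hd (by positivity)]
    have h1 : |w|^3 ≤ (1+|w|)^3 := pow_le_pow_left₀ hw (by linarith) 3
    have h2 : ((k:ℝ)+1)^3 ≤ 64 * ((k:ℝ) * ((k:ℝ)-1) * ((k:ℝ)-2)) := by
      have e1 : (k:ℝ)+1 ≤ 4*((k:ℝ)-2) := by linarith
      have e2 : (k:ℝ)+1 ≤ 4*((k:ℝ)-1) := by linarith
      have e3 : (k:ℝ)+1 ≤ 4*(k:ℝ) := by linarith
      have hp : (0:ℝ) ≤ (k:ℝ)+1 := by linarith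
      have hq : (0:ℝ) ≤ (4*(k:ℝ))*(4*((k:ℝ)-1)) := by nlinarith
      calc ((k:ℝ)+1)^3 = ((k:ℝ)+1)*((k:ℝ)+1)*((k:ℝ)+1) := by ring
        _ ≤ (4*(k:ℝ))*(4*((k:ℝ)-1))*(4*((k:ℝ)-2)) :=
            mul_le_mul (mul_le_mul e3 e2 hp (by linarith)) e1 hp hq
        _ = 64 * ((k:ℝ) * ((k:ℝ)-1) * ((k:ℝ)-2)) := by ring
    calc |w|^3 * Real.exp |w| * ((k:ℝ)+1)^3
        ≤ (1+|w|)^3 * Real.exp |w| * (64 * ((k:ℝ) * ((k:ℝ)-1) * ((k:ℝ)-2))) := by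
          apply mul_le_mul (by gcongr) h2 (by positivity) (by positivity)
      _ = 64 * (1+|w|)^3 * Real.exp |w| * ((k:ℝ) * ((k:ℝ)-1) * ((k:ℝ)-2)) := by ring

lemma besselI_zero (k : ℕ) (hk : 1 ≤ k) : besselI k 0 = 0 := by
  have hk0 : ((k:ℝ)) ≠ 0 := by positivity
  unfold besselI
  have : (∫ θ in (0:ℝ)..π, Real.exp (0 * Real.cos θ) * Real.cos ((k:ℝ) * θ))
      = ∫ θ in (0:ℝ)..π, Real.cos ((k:ℝ) * θ) := by
    apply intervalIntegral.integral_congr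
    intro θ _
    simp
  rw [this, intervalIntegral.integral_comp_mul_left (fun x => Real.cos x) hk0]
  simp [Real.sin_nat_mul_pi]

lemma hasDerivAt_besselI_core (ν : ℕ) (w : ℝ) :
    HasDerivAt (besselI ν)
      ((1/π) * ∫ θ in (0:ℝ)..π, Real.cos θ * Real.exp (w * Real.cos θ) * Real.cos ((ν:ℝ) * θ)) w := by
  have key := intervalIntegral.hasDerivAt_integral_of_dominated_loc_of_deriv_le
    (F := fun x θ => Real.exp (x * Real.cos θ) * Real.cos ((ν:ℝ) * θ))
    (F' := fun x θ => Real.cos θ * Real.exp (x * Real.cos θ) * Real.cos ((ν:ℝ) * θ))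
    (bound := fun _ => Real.exp (|w| + 1))
    (μ := volume) (a := 0) (b := π) (x₀ := w) (s := Metric.ball w 1) (Metric.ball_mem_nhds w zero_lt_one)
    (Filter.Eventually.of_forall fun x =>
      (besselI_integrand_cont (ν:ℝ) x).aestronglyMeasurable)
    (Continuous.intervalIntegrable (besselI_integrand_cont (ν:ℝ) w) _ _)
    ((by fun_prop : Continuous fun θ : ℝ =>
      Real.cos θ * Real.exp (w * Real.cos θ) * Real.cos ((ν:ℝ) * θ)).aestronglyMeasurable)
    (Filter.Eventually.of_forall fun θ _ => fun x hx => ?_)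
    (Continuous.intervalIntegrable continuous_const _ _)
    (Filter.Eventually.of_forall fun θ _ => fun x _ => ?_)
  · have h2 := key.2.const_mul (1/π)
    exact h2
  · -- bound
    have hx1 : |x| ≤ |w| + 1 := by
      have := mem_ball_iff_norm.mp hx
      rw [Real.norm_eq_abs] at this
      calc |x| = |w + (x - w)| := by ring_nf
        _ ≤ |w| + |x - w| := abs_add_le _ _
        _ ≤ |w| + 1 := by linarith [this]
    rw [Real.norm_eq_abs, abs_mul, abs_mul, Real.abs_exp]
    calc |Real.cos θ| * Real.exp (x * Real.cos θ) * |Real.cos ((ν:ℝ) * θ)|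
        ≤ 1 * Real.exp (x * Real.cos θ) * 1 := by
          gcongr
          · exact Real.abs_cos_le_one _
          · exact Real.abs_cos_le_one _
      _ = Real.exp (x * Real.cos θ) := by ring
      _ ≤ Real.exp (|w| + 1) := by
          apply Real.exp_le_exp.2
          calc x * Real.cos θ ≤ |x * Real.cos θ| := le_abs_self _
            _ = |x| * |Real.cos θ| := abs_mul _ _
            _ ≤ (|w| + 1) * 1 :=
              mul_le_mul hx1 (Real.abs_cos_le_one _) (abs_nonneg _) (by positivity)
            _ = |w| + 1 := mul_one _
  · -- differentiability
    have h := (((hasDerivAt_id x).mul_const (Real.cos θ)).exp).mul_const (Real.cos ((ν:ℝ) * θ))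
    refine h.congr_deriv ?_
    simp only [id]
    ring

lemma besselI_continuous (ν : ℕ) : Continuous (besselI ν) := by
  rw [continuous_iff_continuousAt]
  intro w
  exact (hasDerivAt_besselI_core ν w).continuousAt

lemma hasDerivAt_besselI (ν : ℕ) (hν : 1 ≤ ν) (w : ℝ) :
    HasDerivAt (besselI ν) ((besselI (ν-1) w + besselI (ν+1) w)/2) w := by
  have h := hasDerivAt_besselI_core ν w
  have heq : ((1/π) * ∫ θ in (0:ℝ)..π, Real.cos θ * Real.exp (w * Real.cos θ) * Real.cos ((ν:ℝ) * θ))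
      = (besselI (ν-1) w + besselI (ν+1) w)/2 := by
    have hcast1 : (((ν-1 : ℕ)):ℝ) = (ν:ℝ) - 1 := by
      push_cast [Nat.cast_sub hν]; ring
    have hcast2 : (((ν+1 : ℕ)):ℝ) = (ν:ℝ) + 1 := by push_cast; ring
    unfold besselI
    rw [hcast1, hcast2]
    have hsplit : (∫ θ in (0:ℝ)..π, Real.cos θ * Real.exp (w * Real.cos θ) * Real.cos ((ν:ℝ) * θ))
        = ((∫ θ in (0:ℝ)..π, Real.exp (w * Real.cos θ) * Real.cos (((ν:ℝ)-1) * θ))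
            + ∫ θ in (0:ℝ)..π, Real.exp (w * Real.cos θ) * Real.cos (((ν:ℝ)+1) * θ))/2 := by
      rw [← intervalIntegral.integral_add
        (Continuous.intervalIntegrable (by fun_prop) _ _)
        (Continuous.intervalIntegrable (by fun_prop) _ _),
        ← intervalIntegral.integral_div]
      apply intervalIntegral.integral_congr
      intro θ _
      have htrig : Real.cos θ * Real.cos ((ν:ℝ) * θ)
          = (Real.cos (((ν:ℝ)-1) * θ) + Real.cos (((ν:ℝ)+1) * θ))/2 := by
        rw [show ((ν:ℝ)-1) * θ = (ν:ℝ)*θ - θ by ring, show ((ν:ℝ)+1) * θ = (ν:ℝ)*θ + θ by ring,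
          Real.cos_sub, Real.cos_add]
        ring
      simp only
      rw [show Real.cos θ * Real.exp (w * Real.cos θ) * Real.cos ((ν:ℝ) * θ)
          = Real.exp (w * Real.cos θ) * (Real.cos θ * Real.cos ((ν:ℝ) * θ)) by ring, htrig]
      ring
    rw [hsplit]
    ring
  rw [heq] at h
  exact h

lemma besselI_bound_aux (j l : ℕ) (hlj : l ≤ j) {x R : ℝ} (hx : |x| ≤ R) :
    |besselI j x| ≤ 64 * (1+R)^3 * Real.exp R / ((l:ℝ)+1)^3 := by
  have h0 : (0:ℝ) ≤ |x| := abs_nonneg x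
  have hR : (0:ℝ) ≤ R := le_trans h0 hx
  have hj : ((l:ℝ))+1 ≤ (j:ℝ)+1 := by
    have : (l:ℝ) ≤ (j:ℝ) := by exact_mod_cast hlj
    linarith
  calc |besselI j x| ≤ 64 * (1+|x|)^3 * Real.exp |x| / ((j:ℝ)+1)^3 := abs_besselI_le' j x
    _ ≤ 64 * (1+R)^3 * Real.exp R / ((j:ℝ)+1)^3 := by
        gcongr <;> first | positivity | linarith | exact Real.exp_le_exp.2 hx
    _ ≤ 64 * (1+R)^3 * Real.exp R / ((l:ℝ)+1)^3 := by
        gcongr <;> first | positivity | linarith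

lemma summable_inv_sq_shift (C : ℝ) : Summable (fun l : ℕ => C/((l:ℝ)+1)^2) := by
  have h1 : Summable (fun n : ℕ => 1 / (n:ℝ) ^ 2) :=
    Real.summable_one_div_nat_pow.mpr (by norm_num)
  have h2 : Summable (fun n : ℕ => 1 / ((n:ℝ)+1) ^ 2) := by
    have := (summable_nat_add_iff 1).mpr h1
    apply this.congr
    intro n
    push_cast
    ring
  have h3 := h2.mul_left C
  apply h3.congr
  intro n
  ring

lemma tendsto_K_div_pow (K : ℝ) (p : ℕ) (hp : 1 ≤ p) :
    Tendsto (fun N : ℕ => K/((N:ℝ)+1)^p) atTop (nhds 0) := by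
  have hinv : Tendsto (fun N : ℕ => 1/((N:ℝ)+1)) atTop (nhds 0) :=
    tendsto_one_div_add_atTop_nhds_zero_nat
  have h := (hinv.pow p).const_mul K
  have h0 : K * (0:ℝ)^p = 0 := by rw [zero_pow (by omega : p ≠ 0)]; ring
  rw [h0] at h
  apply h.congr
  intro N
  rw [div_pow, one_pow]
  ring

lemma hasDerivAt_S (m : ℕ) (a : ℝ) :
    HasDerivAt (fun y : ℝ => ∑' l : ℕ, ((l:ℝ)+1) * Real.exp (-y) * besselI (m+l+1) y)
      (Real.exp (-a) * besselI m a / 2) a := by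
  set R : ℝ := |a| + 1 with hRdef
  have hRnn : (0:ℝ) ≤ R := by positivity
  set s : Set ℝ := Set.Ioo (a-1) (a+1) with hsdef
  have ha_mem : a ∈ s := by constructor <;> simp [hsdef] <;> linarith
  have hmem : ∀ x ∈ s, |x| ≤ R := by
    intro x hx
    rw [abs_le]
    constructor
    · have := hx.1
      have := neg_abs_le a
      simp only [hRdef]
      linarith
    · have := hx.2
      have := le_abs_self a
      simp only [hRdef]
      linarith
  -- term functions
  set f : ℕ → ℝ → ℝ := fun l y => ((l:ℝ)+1) * Real.exp (-y) * besselI (m+l+1) y with hfdef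
  set f' : ℕ → ℝ → ℝ := fun l y => ((l:ℝ)+1) *
      (Real.exp (-y) * ((besselI (m+l) y + besselI (m+l+2) y)/2)
        - Real.exp (-y) * besselI (m+l+1) y) with hf'def
  have hderiv : ∀ (l : ℕ) (x : ℝ), HasDerivAt (f l) (f' l x) x := by
    intro l x
    have h1 : HasDerivAt (fun y : ℝ => Real.exp (-y)) (-Real.exp (-x)) x := by
      simpa using ((hasDerivAt_id x).neg).exp
    have h2 : HasDerivAt (fun y => besselI (m+l+1) y)
        ((besselI (m+l) x + besselI (m+l+2) x)/2) x := by
      have h := hasDerivAt_besselI (m+l+1) (by omega) x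
      simpa [Nat.add_sub_cancel] using h
    have h3 := (h1.mul h2).const_mul ((l:ℝ)+1)
    have h4 : (fun y => ((l:ℝ)+1) * (Real.exp (-y) * besselI (m+l+1) y)) = f l := by
      funext y
      simp only [hfdef]
      ring
    rw [← h4]
    refine h3.congr_deriv ?_
    simp only [hf'def]
    ring
  -- bound for derivatives on s
  set u : ℕ → ℝ := fun l => 128*(1+R)^3*Real.exp (2*R)/((l:ℝ)+1)^2 with hudef
  have hbound : ∀ (l : ℕ), ∀ x ∈ s, ‖f' l x‖ ≤ u l := by
    intro l x hx
    have hxR := hmem x hx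
    have hexp : Real.exp (-x) ≤ Real.exp R := by
      apply Real.exp_le_exp.2
      have := (abs_le.1 hxR).1
      linarith
    have hexp0 : (0:ℝ) < Real.exp (-x) := Real.exp_pos _
    have B1 := besselI_bound_aux (m+l) l (by omega) hxR
    have B2 := besselI_bound_aux (m+l+2) l (by omega) hxR
    have B3 := besselI_bound_aux (m+l+1) l (by omega) hxR
    set Bv : ℝ := 64 * (1+R)^3 * Real.exp R / ((l:ℝ)+1)^3 with hBvdef
    have hBv : (0:ℝ) ≤ Bv := by positivity
    have hl1 : (0:ℝ) < ((l:ℝ)+1) := by positivity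
    rw [Real.norm_eq_abs]
    have step : |f' l x| ≤ ((l:ℝ)+1) * (Real.exp R * (2 * Bv)) := by
      simp only [hf'def]
      rw [abs_mul, abs_of_pos hl1, ← mul_sub, abs_mul, Real.abs_exp]
      have habs : |(besselI (m+l) x + besselI (m+l+2) x)/2 - besselI (m+l+1) x| ≤ 2 * Bv := by
        calc |(besselI (m+l) x + besselI (m+l+2) x)/2 - besselI (m+l+1) x|
            ≤ |(besselI (m+l) x + besselI (m+l+2) x)/2| + |besselI (m+l+1) x| := abs_sub _ _
          _ ≤ (|besselI (m+l) x| + |besselI (m+l+2) x|)/2 + |besselI (m+l+1) x| := by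
              gcongr
              rw [abs_div]
              simp only [abs_two]
              gcongr
              exact abs_add_le _ _
          _ ≤ (Bv + Bv)/2 + Bv := by gcongr
          _ = 2 * Bv := by ring
      gcongr
    refine step.trans ?_
    have hexpR : Real.exp R * Real.exp R = Real.exp (2*R) := by
      rw [← Real.exp_add]; ring_nf
    simp only [hudef, hBvdef]
    rw [le_div_iff₀ (by positivity)]
    have hone : ((l:ℝ)+1) * ((l:ℝ)+1)^2 / ((l:ℝ)+1)^3 = 1 := by
      field_simp
    calc ((l:ℝ)+1) * (Real.exp R * (2 * (64 * (1+R)^3 * Real.exp R / ((l:ℝ)+1)^3))) * ((l:ℝ)+1)^2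
        = (Real.exp R * Real.exp R) * (128 * (1+R)^3) *
            (((l:ℝ)+1) * ((l:ℝ)+1)^2 / ((l:ℝ)+1)^3) := by ring
      _ = 128*(1+R)^3*Real.exp (2*R) := by
          rw [hexpR, hone, mul_one]
          ring
      _ ≤ 128*(1+R)^3*Real.exp (2*R) := le_refl _
  have hu : Summable u := summable_inv_sq_shift _
  -- summability of f on s
  have hfb : ∀ (l : ℕ), ∀ x ∈ s, ‖f l x‖ ≤ u l := by
    intro l x hx
    have hxR := hmem x hx
    have hexp : Real.exp (-x) ≤ Real.exp R := by
      apply Real.exp_le_exp.2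
      have := (abs_le.1 hxR).1
      linarith
    have B3 := besselI_bound_aux (m+l+1) l (by omega) hxR
    have hl1 : (0:ℝ) < ((l:ℝ)+1) := by positivity
    rw [Real.norm_eq_abs]
    simp only [hfdef]
    rw [abs_mul, abs_mul, abs_of_pos hl1, Real.abs_exp]
    calc ((l:ℝ)+1) * Real.exp (-x) * |besselI (m+l+1) x|
        ≤ ((l:ℝ)+1) * Real.exp R * (64 * (1+R)^3 * Real.exp R / ((l:ℝ)+1)^3) := by gcongr
      _ ≤ u l := by
          simp only [hudef]
          rw [le_div_iff₀ (by positivity)]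
          have hexpR : Real.exp R * Real.exp R = Real.exp (2*R) := by
            rw [← Real.exp_add]; ring_nf
          have hone : ((l:ℝ)+1) * ((l:ℝ)+1)^2 / ((l:ℝ)+1)^3 = 1 := by
            field_simp
          calc ((l:ℝ)+1) * Real.exp R * (64 * (1+R)^3 * Real.exp R / ((l:ℝ)+1)^3) * ((l:ℝ)+1)^2
              = (Real.exp R * Real.exp R) * (64 * (1+R)^3) *
                  (((l:ℝ)+1) * ((l:ℝ)+1)^2 / ((l:ℝ)+1)^3) := by ring
            _ = 64*(1+R)^3*Real.exp (2*R) := by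
                rw [hexpR, hone, mul_one]
                ring
            _ ≤ 128*(1+R)^3*Real.exp (2*R) := by
                nlinarith [mul_pos (by positivity : (0:ℝ) < (1+R)^3) (Real.exp_pos (2*R))]
  have hfs : ∀ x ∈ s, Summable (fun l => f l x) := fun x hx =>
    Summable.of_norm_bounded hu (fun l => hfb l x hx)
  -- uniform limit of derivatives
  have hd : HasDerivAt (fun y => ∑' l : ℕ, f l y) (∑' l : ℕ, f' l a) a := by
    apply hasDerivAt_of_tendstoUniformlyOn (isOpen_Ioo)
      (tendstoUniformlyOn_tsum_nat hu (fun l x hx => hbound l x hx))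
      (Filter.Eventually.of_forall fun N x _ => HasDerivAt.sum (fun l _ => hderiv l x))
      (fun x hx => by simpa only [Finset.sum_apply] using (hfs x hx).hasSum.tendsto_sum_nat) ha_mem
  -- identify the sum of derivatives by telescoping
  have hsum' : Summable (fun l => f' l a) :=
    Summable.of_norm_bounded hu (fun l => hbound l a ha_mem)
  set cs : ℕ → ℝ := fun j => Real.exp (-a) * besselI (m+j) a with hcsdef
  have hcb : ∀ N : ℕ, |cs N| ≤ (Real.exp (-a) * (64*(1+|a|)^3*Real.exp |a|))/((N:ℝ)+1)^3 := by
    intro N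
    have B := besselI_bound_aux (m+N) N (by omega) (le_refl |a|)
    simp only [hcsdef]
    rw [abs_mul, Real.abs_exp]
    refine le_trans (mul_le_mul_of_nonneg_left B (Real.exp_pos (-a)).le) ?_
    exact le_of_eq (by ring)
  have hpart : ∀ N : ℕ, ∑ l ∈ Finset.range N, f' l a
      = cs 0/2 - cs (N+1)/2 - ((N:ℝ)+1)*(cs N - cs (N+1))/2 := by
    intro N
    induction N with
    | zero =>
      simp only [Finset.range_zero, Finset.sum_empty, Nat.cast_zero]
      ring
    | succ N ih =>
      rw [Finset.sum_range_succ, ih]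
      have i1 : m+(N+1) = m+N+1 := by omega
      have i2 : m+(N+2) = m+N+2 := by omega
      have hfN : f' N a = ((N:ℝ)+1) * ((cs N + cs (N+2))/2 - cs (N+1)) := by
        simp only [hf'def, hcsdef, i1, i2]
        ring
      rw [hfN]
      simp only [(by omega : N+1+1 = N+2)]
      push_cast
      ring
  set K : ℝ := Real.exp (-a) * (64*(1+|a|)^3*Real.exp |a|) with hKdef
  have hK : (0:ℝ) ≤ K := by positivity
  have hc0 : Tendsto (fun N : ℕ => cs (N+1)) atTop (nhds 0) := by
    refine squeeze_zero_norm ?_ (tendsto_K_div_pow K 3 (by norm_num))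
    intro N
    calc ‖cs (N+1)‖ = |cs (N+1)| := rfl
      _ ≤ K/(((N+1:ℕ):ℝ)+1)^3 := hcb (N+1)
      _ ≤ K/((N:ℝ)+1)^3 := by
          push_cast
          gcongr
          all_goals first | linarith | positivity
  have hc1 : Tendsto (fun N : ℕ => ((N:ℝ)+1)*(cs N - cs (N+1))) atTop (nhds 0) := by
    refine squeeze_zero_norm ?_ (tendsto_K_div_pow (2*K) 2 (by norm_num))
    intro N
    have hN1 : (0:ℝ) < ((N:ℝ)+1) := by positivity
    calc ‖((N:ℝ)+1)*(cs N - cs (N+1))‖ = ((N:ℝ)+1) * |cs N - cs (N+1)| := by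
          rw [norm_mul, Real.norm_eq_abs, Real.norm_eq_abs, abs_of_pos hN1]
      _ ≤ ((N:ℝ)+1) * (|cs N| + |cs (N+1)|) := by gcongr; exact abs_sub _ _
      _ ≤ ((N:ℝ)+1) * (K/((N:ℝ)+1)^3 + K/((N:ℝ)+1)^3) := by
          gcongr
          · exact hcb N
          · refine (hcb (N+1)).trans ?_
            push_cast
            gcongr
            all_goals first | linarith | positivity
      _ = 2*K/((N:ℝ)+1)^2 := by
          field_simp
          ring
  have hlim : Tendsto (fun N : ℕ => cs 0/2 - cs (N+1)/2 - ((N:ℝ)+1)*(cs N - cs (N+1))/2)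
      atTop (nhds (cs 0/2)) := by
    have h := ((tendsto_const_nhds (x := cs 0/2) (f := atTop)).sub
      (hc0.div_const 2)).sub (hc1.div_const 2)
    simpa using h
  have htsum : (∑' l : ℕ, f' l a) = cs 0/2 :=
    tendsto_nhds_unique hsum'.hasSum.tendsto_sum_nat
      (hlim.congr (fun N => (hpart N).symm))
  rw [htsum] at hd
  have hcs0 : cs 0/2 = Real.exp (-a) * besselI m a / 2 := by
    simp only [hcsdef, Nat.add_zero]
  rw [hcs0] at hd
  exact hd

lemma integral_exp_besselI (m : ℕ) (A : ℝ) :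
    (∫ u in (0:ℝ)..A, Real.exp (-u) * besselI m u)
      = 2 * ∑' l : ℕ, ((l:ℝ)+1) * Real.exp (-A) * besselI (m+l+1) A := by
  have hderiv : ∀ u ∈ Set.uIcc (0:ℝ) A,
      HasDerivAt (fun y : ℝ => 2 * ∑' l : ℕ, ((l:ℝ)+1) * Real.exp (-y) * besselI (m+l+1) y)
        (Real.exp (-u) * besselI m u) u := by
    intro u _
    have h := (hasDerivAt_S m u).const_mul 2
    refine h.congr_deriv ?_
    ring
  have hint : IntervalIntegrable (fun u => Real.exp (-u) * besselI m u) volume 0 A :=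
    Continuous.intervalIntegrable
      ((Real.continuous_exp.comp continuous_neg).mul (besselI_continuous m)) _ _
  rw [intervalIntegral.integral_eq_sub_of_hasDerivAt hderiv hint]
  have hS0 : (∑' l : ℕ, ((l:ℝ)+1) * Real.exp (-(0:ℝ)) * besselI (m+l+1) 0) = 0 := by
    have hz : ∀ l : ℕ, ((l:ℝ)+1) * Real.exp (-(0:ℝ)) * besselI (m+l+1) 0 = 0 := by
      intro l
      rw [besselI_zero (m+l+1) (by omega)]
      ring
    rw [tsum_congr hz, tsum_zero]
  rw [hS0]
  ring

lemma exp_integral_aux (b : ℝ) (hb : 0 < b) (A : ℝ) :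
    (∫ u in (0:ℝ)..A, Real.exp (-(u*b))) = (1 - Real.exp (-(A*b)))/b := by
  have hd : ∀ u : ℝ, HasDerivAt (fun u : ℝ => (1 - Real.exp (-(u*b)))/b)
      (Real.exp (-(u*b))) u := by
    intro u
    have h1 : HasDerivAt (fun u : ℝ => -(u*b)) (-b) u := by
      exact (((hasDerivAt_id u).mul_const b).neg).congr_deriv (by ring)
    have h2 := (h1.exp).const_sub 1
    have h3 := h2.div_const b
    refine h3.congr_deriv ?_
    field_simp
  rw [intervalIntegral.integral_eq_sub_of_hasDerivAt (fun u _ => hd u)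
    (Continuous.intervalIntegrable (by fun_prop) _ _)]
  simp

lemma theta_integral (m : ℕ) {A : ℝ} (hA : 0 ≤ A) :
    (∫ θ in (0:ℝ)..π, (1 - Real.exp (-(A*(1-Real.cos θ))))/(1-Real.cos θ) * Real.cos (m*θ))
      = π * ∫ u in (0:ℝ)..A, Real.exp (-u) * besselI m u := by
  set F : ℝ → ℝ → ℝ := fun θ u => Real.exp (-(u*(1-Real.cos θ))) * Real.cos ((m:ℝ)*θ) with hFdef
  rw [intervalIntegral.integral_of_le Real.pi_pos.le, MeasureTheory.integral_Ioc_eq_integral_Ioo]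
  have hpt : ∀ θ ∈ Set.Ioo (0:ℝ) π,
      (1 - Real.exp (-(A*(1-Real.cos θ))))/(1-Real.cos θ) * Real.cos ((m:ℝ)*θ)
        = ∫ u in Set.Ioc (0:ℝ) A, F θ u := by
    intro θ hθ
    have hb : 0 < 1 - Real.cos θ := by
      have h1 : Real.cos θ < 1 := by
        have := Real.strictAntiOn_cos ⟨le_refl 0, Real.pi_pos.le⟩ ⟨hθ.1.le, hθ.2.le⟩ hθ.1
        simpa using this
      linarith
    rw [← intervalIntegral.integral_of_le hA, hFdef]
    simp only
    rw [intervalIntegral.integral_mul_const, exp_integral_aux _ hb]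
  rw [MeasureTheory.setIntegral_congr_fun measurableSet_Ioo hpt]
  have hcont : Continuous (Function.uncurry F) := by
    simp only [hFdef, Function.uncurry]
    fun_prop
  have hintg : Integrable (Function.uncurry F)
      ((volume.restrict (Set.Ioo (0:ℝ) π)).prod (volume.restrict (Set.Ioc (0:ℝ) A))) := by
    rw [MeasureTheory.Measure.prod_restrict, ← MeasureTheory.Measure.volume_eq_prod]
    exact (hcont.continuousOn.integrableOn_compact (isCompact_Icc.prod isCompact_Icc)).mono_set
      (Set.prod_mono Set.Ioo_subset_Icc_self Set.Ioc_subset_Icc_self)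
  rw [MeasureTheory.integral_integral_swap hintg]
  have hinner : ∀ u : ℝ, (∫ θ in Set.Ioo (0:ℝ) π, F θ u) = π * (Real.exp (-u) * besselI m u) := by
    intro u
    rw [← MeasureTheory.integral_Ioc_eq_integral_Ioo,
      ← intervalIntegral.integral_of_le Real.pi_pos.le]
    have heq : ∀ θ : ℝ, F θ u = Real.exp (-u) * (Real.exp (u * Real.cos θ) * Real.cos ((m:ℝ)*θ)) := by
      intro θ
      simp only [hFdef]
      rw [show -(u*(1-Real.cos θ)) = -u + u*Real.cos θ by ring, Real.exp_add]
      ring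
    rw [intervalIntegral.integral_congr (fun θ _ => heq θ), intervalIntegral.integral_const_mul]
    unfold besselI
    have hπ : (π:ℝ) ≠ 0 := Real.pi_ne_zero
    field_simp
  calc (∫ u in Set.Ioc (0:ℝ) A, ∫ θ in Set.Ioo (0:ℝ) π, F θ u)
      = ∫ u in Set.Ioc (0:ℝ) A, π * (Real.exp (-u) * besselI m u) := by
        apply MeasureTheory.setIntegral_congr_fun measurableSet_Ioc
        intro u _
        exact hinner u
    _ = π * ∫ u in Set.Ioc (0:ℝ) A, Real.exp (-u) * besselI m u :=
        MeasureTheory.integral_const_mul _ _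
    _ = π * ∫ u in (0:ℝ)..A, Real.exp (-u) * besselI m u := by
        rw [intervalIntegral.integral_of_le hA]

/-- Chebyshev coefficients of `g(x) = (1 − e^{−ct} e^{−ctx})/(c(x+1))`:
`a_m[g] = (4/c)(−1)^m Σ_{l≥0} (l+1) e^{−ct} I_{m+l+1}(ct)`. -/
theorem chebCoeff_of_g (c t : ℝ) (hc : 0 < c) (ht : 0 ≤ t) (m : ℕ) :
    chebCoeff (fun x => (1 - Real.exp (-(c * t)) * Real.exp (-(c * t * x))) / (c * (x + 1))) m =
      (4 / c) * (-1) ^ m *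
        ∑' l : ℕ, ((l : ℝ) + 1) * Real.exp (-(c * t)) * besselI (m + l + 1) (c * t) := by
  set g : ℝ → ℝ :=
    fun x => (1 - Real.exp (-(c * t)) * Real.exp (-(c * t * x))) / (c * (x + 1)) with hgdef
  have hA : 0 ≤ c * t := by positivity
  rw [chebCoeff_eq g m, flip_integral g m]
  have hpt : ∀ θ : ℝ, g (-Real.cos θ) * Real.cos ((m:ℝ)*θ)
      = (1/c) * ((1 - Real.exp (-((c*t)*(1-Real.cos θ))))/(1-Real.cos θ) * Real.cos ((m:ℝ)*θ)) := by
    intro θ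
    simp only [hgdef]
    have h1 : Real.exp (-(c * t)) * Real.exp (-(c * t * -Real.cos θ))
        = Real.exp (-((c*t)*(1-Real.cos θ))) := by
      rw [← Real.exp_add]
      congr 1
      ring
    rw [h1, show c * (-Real.cos θ + 1) = c * (1 - Real.cos θ) by ring,
      div_mul_eq_div_div_swap]
    ring
  rw [intervalIntegral.integral_congr (fun θ _ => hpt θ),
    intervalIntegral.integral_const_mul, theta_integral m hA, integral_exp_besselI m (c*t)]
  have hπ : (π:ℝ) ≠ 0 := Real.pi_ne_zero
  field_simp
  ring_nf
  congr 1
  exact tsum_congr fun l => by ring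
end

section
/- For w > 0 and integer ν ≥ 0, the modified Bessel functions satisfy the ratio bound I_{ν+1}(w) < I_ν(w)/(1 + ν/w). -/
open MeasureTheory Real
open scoped Nat

noncomputable def Jint (n ν : ℕ) : ℝ :=
  ∫ θ in (0:ℝ)..Real.pi, Real.cos θ ^ n * Real.cos (ν * θ)

lemma Jint_contin (n ν : ℕ) : Continuous (fun θ : ℝ => Real.cos θ ^ n * Real.cos (ν * θ)) := by
  fun_prop

lemma Jint_zero_zero : Jint 0 0 = Real.pi := by
  simp [Jint]

lemma Jint_zero_succ (ν : ℕ) : Jint 0 (ν + 1) = 0 := by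
  have hν : ((ν:ℝ) + 1) ≠ 0 := by positivity
  simp only [Jint, pow_zero, one_mul]
  push_cast
  rw [intervalIntegral.integral_comp_mul_left (fun x => Real.cos x) hν]
  rw [integral_cos]
  have : ((ν:ℝ) + 1) * Real.pi = ((ν + 1 : ℕ) : ℝ) * Real.pi := by push_cast; ring
  rw [mul_zero, this, Real.sin_nat_mul_pi]
  simp

lemma Jint_rec (n ν : ℕ) :
    Jint (n + 1) (ν + 1) = (Jint n ν + Jint n (ν + 2)) / 2 := by
  have h : ∀ θ : ℝ, Real.cos θ ^ (n+1) * Real.cos ((ν+1 : ℕ) * θ)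
      = (Real.cos θ ^ n * Real.cos ((ν:ℕ) * θ) + Real.cos θ ^ n * Real.cos ((ν+2 : ℕ) * θ)) / 2 := by
    intro θ
    have h1 : ((ν:ℝ)+2) * θ = ((ν:ℝ)+1) * θ + θ := by ring
    have h2 : (ν:ℝ) * θ = ((ν:ℝ)+1) * θ - θ := by ring
    push_cast
    rw [h1, h2, Real.cos_add, Real.cos_sub]
    ring
  have hInt : ∀ m μ : ℕ, IntervalIntegrable (fun θ : ℝ => Real.cos θ ^ m * Real.cos (μ * θ))
      volume 0 Real.pi := fun m μ => (Jint_contin m μ).intervalIntegrable _ _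
  rw [Jint, intervalIntegral.integral_congr (g := fun θ =>
      (Real.cos θ ^ n * Real.cos ((ν:ℕ) * θ) + Real.cos θ ^ n * Real.cos ((ν+2 : ℕ) * θ)) / 2)
      (fun θ _ => h θ)]
  rw [intervalIntegral.integral_div, intervalIntegral.integral_add (hInt n ν) (hInt n (ν+2))]
  rfl

lemma Jint_rec0 (n : ℕ) : Jint (n + 1) 0 = Jint n 1 := by
  have h : ∀ θ : ℝ, Real.cos θ ^ (n+1) * Real.cos ((0:ℕ) * θ)
      = Real.cos θ ^ n * Real.cos ((1:ℕ) * θ) := by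
    intro θ; push_cast; simp [pow_succ]
  rw [Jint, intervalIntegral.integral_congr (g := fun θ =>
      Real.cos θ ^ n * Real.cos ((1:ℕ) * θ)) (fun θ _ => h θ)]
  rfl

lemma Jint_eq_zero : ∀ n ν : ℕ, (n < ν ∨ (n + ν) % 2 = 1) → Jint n ν = 0 := by
  intro n
  induction n with
  | zero =>
    intro ν h
    obtain ⟨μ, rfl⟩ : ∃ μ, ν = μ + 1 := ⟨ν - 1, by omega⟩
    exact Jint_zero_succ μ
  | succ n ih =>
    intro ν h
    match ν with
    | 0 =>
      rw [Jint_rec0]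
      exact ih 1 (by omega)
    | μ + 1 =>
      rw [Jint_rec, ih μ (by omega), ih (μ + 2) (by omega)]
      norm_num

lemma Jint_eq : ∀ n ν k : ℕ, n = ν + 2 * k →
    Jint n ν = Real.pi * n ! / (2 ^ n * k ! * (k + ν)!) := by
  intro n
  induction n with
  | zero =>
    intro ν k h
    obtain ⟨rfl, rfl⟩ : ν = 0 ∧ k = 0 := by omega
    simp [Jint_zero_zero, Nat.factorial]
  | succ n ih =>
    intro ν k h
    have hfn : ((n + 1)! : ℝ) = (n+1) * n ! := by exact_mod_cast Nat.factorial_succ n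
    match ν, k with
    | 0, 0 => omega
    | 0, m + 1 =>
      rw [Jint_rec0, ih 1 m (by omega)]
      have hfm : ((m + 1)! : ℝ) = (m+1) * m ! := by exact_mod_cast Nat.factorial_succ m
      have e1 : m + 1 + 0 = m + 1 := by omega
      have e2 : m + 1 = m + 1 := rfl
      rw [e1]
      have hn : (n : ℝ) = 2*m + 1 := by exact_mod_cast congrArg (Nat.cast (R := ℝ)) (by omega : n = 2*m+1)
      rw [div_eq_div_iff (by positivity) (by positivity), hfn, hfm, pow_succ, hn]
      ring
    | μ + 1, 0 =>
      have hnμ : n = μ := by omega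
      subst hnμ
      rw [Jint_rec, ih n 0 (by omega), Jint_eq_zero n (n + 2) (by omega), add_zero]
      rw [div_div, div_eq_div_iff (by positivity) (by positivity)]
      have e1 : 0 + n = n := by omega
      have e2 : 0 + (n + 1) = n + 1 := by omega
      rw [e1, e2, hfn, pow_succ]
      ring
    | μ + 1, m + 1 =>
      have h1 : n = μ + 2 * (m + 1) := by omega
      have h2 : n = (μ + 2) + 2 * m := by omega
      rw [Jint_rec, ih μ (m+1) h1, ih (μ + 2) m h2]
      have hb : m + (μ + 2) = (m + 1 + μ) + 1 := by omega
      have hb2 : m + 1 + (μ + 1) = (m + 1 + μ) + 1 := by omega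
      rw [hb, hb2]
      have hfb : (((m + 1 + μ) + 1)! : ℝ) = (m + 1 + μ + 1) * ((m + 1 + μ)!) := by
        exact_mod_cast Nat.factorial_succ (m + 1 + μ)
      have hfm : ((m + 1)! : ℝ) = (m+1) * m ! := by exact_mod_cast Nat.factorial_succ m
      have hn : (n : ℝ) = 2*m + μ + 2 := by
        exact_mod_cast congrArg (Nat.cast (R := ℝ)) (by omega : n = 2*m + μ + 2)
      have d1 : (0:ℝ) < 2 ^ n * (m+1)! * ((m+1+μ)!) := by positivity
      have d2 : (0:ℝ) < 2 ^ n * m ! * ((m+1+μ+1)!) := by positivity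
      rw [div_add_div _ _ (ne_of_gt d1) (ne_of_gt d2), div_div,
        div_eq_div_iff (by positivity) (by positivity), hfb, hfm, hfn, pow_succ, hn]
      push_cast
      ring

lemma besselI_eq_tsum_J (ν : ℕ) (w : ℝ) :
    besselI ν w = (1 / Real.pi) * ∑' n : ℕ, w ^ n / n ! * Jint n ν := by
  have hcont : ∀ n : ℕ, Continuous (fun θ : ℝ => (w * Real.cos θ) ^ n / n ! * Real.cos (ν * θ)) := by
    intro n; fun_prop
  have hint : ∀ n : ℕ, IntegrableOn
      (fun θ : ℝ => (w * Real.cos θ) ^ n / n ! * Real.cos (ν * θ)) (Set.Ioc 0 Real.pi) volume :=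
    fun n => (hcont n).integrableOn_Ioc
  have hbound : ∀ n : ℕ, (∫ θ in Set.Ioc (0:ℝ) Real.pi,
      ‖(w * Real.cos θ) ^ n / n ! * Real.cos (ν * θ)‖) ≤ |w| ^ n / n ! * Real.pi := by
    intro n
    have : ∀ θ : ℝ, ‖(w * Real.cos θ) ^ n / n ! * Real.cos (ν * θ)‖ ≤ |w| ^ n / n ! := by
      intro θ
      rw [norm_mul, norm_div, norm_pow, norm_mul]
      have h1 : ‖Real.cos θ‖ ≤ 1 := by rw [Real.norm_eq_abs]; exact Real.abs_cos_le_one θ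
      have h2 : ‖Real.cos (ν * θ)‖ ≤ 1 := by rw [Real.norm_eq_abs]; exact Real.abs_cos_le_one _
      have h3 : ‖w‖ * ‖Real.cos θ‖ ≤ |w| := by
        rw [Real.norm_eq_abs]
        calc |w| * ‖Real.cos θ‖ ≤ |w| * 1 := by gcongr
        _ = |w| := mul_one _
      calc (‖w‖ * ‖Real.cos θ‖) ^ n / ‖(n ! : ℝ)‖ * ‖Real.cos (ν * θ)‖
          ≤ (‖w‖ * ‖Real.cos θ‖) ^ n / ‖(n ! : ℝ)‖ * 1 := by gcongr
        _ = (‖w‖ * ‖Real.cos θ‖) ^ n / ‖(n ! : ℝ)‖ := mul_one _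
        _ ≤ |w| ^ n / ‖(n ! : ℝ)‖ := by gcongr
        _ = |w| ^ n / n ! := by rw [Real.norm_eq_abs, abs_of_nonneg (by positivity : (0:ℝ) ≤ (n ! : ℝ))]
    calc (∫ θ in Set.Ioc (0:ℝ) Real.pi, ‖(w * Real.cos θ) ^ n / n ! * Real.cos (ν * θ)‖)
        ≤ ∫ _ in Set.Ioc (0:ℝ) Real.pi, |w| ^ n / n ! := by
          apply setIntegral_mono_on (hint n).norm (integrableOn_const (by
            simp [Real.pi_pos]))
            measurableSet_Ioc
          intro θ _; exact this θ
      _ = |w| ^ n / n ! * Real.pi := by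
          simp [Real.volume_Ioc, ENNReal.toReal_ofReal Real.pi_pos.le, mul_comm, max_eq_left Real.pi_pos.le]
  have hsum : Summable (fun n : ℕ => ∫ θ in Set.Ioc (0:ℝ) Real.pi,
      ‖(w * Real.cos θ) ^ n / n ! * Real.cos (ν * θ)‖) := by
    apply Summable.of_nonneg_of_le (fun n => integral_nonneg (fun θ => norm_nonneg _)) hbound
    exact (Real.summable_pow_div_factorial |w|).mul_right _
  have key : ∑' n : ℕ, (∫ θ in Set.Ioc (0:ℝ) Real.pi,
      (w * Real.cos θ) ^ n / n ! * Real.cos (ν * θ)) =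
      ∫ θ in Set.Ioc (0:ℝ) Real.pi,
        (∑' n : ℕ, (w * Real.cos θ) ^ n / n ! * Real.cos (ν * θ)) :=
    integral_tsum_of_summable_integral_norm hint hsum
  have hexp : ∀ θ : ℝ, (∑' n : ℕ, (w * Real.cos θ) ^ n / n ! * Real.cos (ν * θ))
      = Real.exp (w * Real.cos θ) * Real.cos (ν * θ) := by
    intro θ
    rw [tsum_mul_right]
    congr 1
    rw [Real.exp_eq_exp_ℝ, NormedSpace.exp_eq_tsum_div]
  have hterm : ∀ n : ℕ, (∫ θ in Set.Ioc (0:ℝ) Real.pi,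
      (w * Real.cos θ) ^ n / n ! * Real.cos (ν * θ)) = w ^ n / n ! * Jint n ν := by
    intro n
    rw [Jint, intervalIntegral.integral_of_le Real.pi_pos.le, ← MeasureTheory.integral_const_mul]
    congr 1 with θ
    rw [mul_pow]
    ring
  rw [besselI, intervalIntegral.integral_of_le Real.pi_pos.le]
  congr 1
  rw [← funext hexp, ← key]
  exact tsum_congr hterm

lemma besselI_eq_series (ν : ℕ) (w : ℝ) :
    besselI ν w = ∑' k : ℕ, (w / 2) ^ (ν + 2 * k) / (k ! * (k + ν)!) := by
  rw [besselI_eq_tsum_J]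
  have hinj : Function.Injective (fun k : ℕ => ν + 2 * k) := by
    intro a b hab
    simp only at hab
    omega
  have hsupp : Function.support (fun n : ℕ => w ^ n / n ! * Jint n ν)
      ⊆ Set.range (fun k : ℕ => ν + 2 * k) := by
    intro n hn
    by_contra hr
    apply hn
    have hz : Jint n ν = 0 := by
      apply Jint_eq_zero
      by_contra hc
      push_neg at hc
      apply hr
      refine ⟨(n - ν) / 2, ?_⟩
      simp only
      omega
    simp [hz]
  rw [← hinj.tsum_eq hsupp]
  rw [← tsum_mul_left]
  apply tsum_congr
  intro k
  rw [Jint_eq (ν + 2 * k) ν k rfl]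
  have hπ : Real.pi ≠ 0 := Real.pi_ne_zero
  have h1 : ((ν + 2 * k)! : ℝ) ≠ 0 := by positivity
  rw [div_pow]
  field_simp

lemma summable_bessel_series (ν : ℕ) (u : ℝ) (hu : 0 < u) :
    Summable (fun k : ℕ => u ^ (ν + 2 * k) / (k ! * (k + ν)!)) := by
  have h1 : Summable (fun k : ℕ => u ^ ν * ((u ^ 2) ^ k / k !)) :=
    (Real.summable_pow_div_factorial (u ^ 2)).mul_left _
  have h2 : ∀ k : ℕ, u ^ (ν + 2 * k) / (k ! * (k + ν)!) ≤ u ^ ν * ((u ^ 2) ^ k / k !) := by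
    intro k
    rw [pow_add, pow_mul, mul_div_assoc]
    gcongr
    calc ((k ! : ℝ)) = k ! * 1 := (mul_one _).symm
      _ ≤ k ! * (k + ν)! := by
          gcongr
          exact_mod_cast Nat.one_le_iff_ne_zero.2 (Nat.factorial_ne_zero _)
  have h0 : ∀ k : ℕ, 0 ≤ u ^ (ν + 2 * k) / (k ! * (k + ν)!) := fun k => by positivity
  exact Summable.of_nonneg_of_le h0 h2 h1

lemma amgm_aux (u s t P : ℝ) (hu : 0 < u) (hs : 0 < s) (hP : 0 < P) (h : 4 * P ≤ s * t) :
    4 * u * P ≤ s * P + u ^ 2 * t := by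
  nlinarith [mul_nonneg (sq_nonneg (s - 2 * u)) hP.le,
    mul_le_mul_of_nonneg_left h (sq_nonneg u)]

lemma c_formula (ν k : ℕ) (u : ℝ) (hu : 0 < u) :
    2 * u * (u ^ (ν + 2 * k) / (k ! * (k + ν)!))
      - ν * (u ^ (ν + 1 + 2 * k) / (k ! * (k + (ν + 1))!))
    = u ^ (ν + 2 * k + 1) * (2 * k + ν + 2) / (k ! * (k + (ν + 1))!) := by
  have e1 : k + (ν + 1) = (k + ν) + 1 := by omega
  have hf : (((k + ν) + 1)! : ℝ) = ((k:ℝ) + ν + 1) * (k + ν)! := by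
    push_cast [Nat.factorial_succ (k + ν)]
    ring
  rw [e1, hf]
  have h1 : ((k ! : ℝ)) ≠ 0 := by positivity
  have h2 : (((k + ν)!) : ℝ) ≠ 0 := by positivity
  have h3 : ((k:ℝ) + ν + 1) ≠ 0 := by positivity
  field_simp
  ring

lemma key_ineq (ν k : ℕ) (u : ℝ) (hu : 0 < u) :
    2 * (2 * u * (u ^ (ν + 1 + 2 * k) / (k ! * (k + (ν + 1))!)))
      ≤ u ^ (ν + 2 * k + 1) * (2 * k + ν + 2) / (k ! * (k + (ν + 1))!)
        + u ^ (ν + 2 * (k + 1) + 1) * (2 * (k + 1) + ν + 2) / ((k + 1)! * ((k + 1) + (ν + 1))!) := by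
  have hs : (0:ℝ) < 2 * k + ν + 2 := by positivity
  have hP : (0:ℝ) < ((k:ℝ) + 1) * ((k:ℝ) + ν + 2) := by positivity
  have hnat : (4:ℝ) * (((k:ℝ) + 1) * ((k:ℝ) + ν + 2)) ≤ (2 * k + ν + 2) * (2 * ((k:ℝ) + 1) + ν + 2) := by
    nlinarith [sq_nonneg (ν : ℝ), (Nat.cast_nonneg ν : (0:ℝ) ≤ ν)]
  have h := amgm_aux u (2 * k + ν + 2) (2 * ((k:ℝ) + 1) + ν + 2) (((k:ℝ) + 1) * ((k:ℝ) + ν + 2)) hu hs hP hnat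
  have hY : (0:ℝ) < u ^ (ν + 2 * k + 1) / ((k ! * (k + (ν + 1))!) * (((k:ℝ) + 1) * ((k:ℝ) + ν + 2))) := by
    positivity
  have h2 := mul_le_mul_of_nonneg_left h hY.le
  have hf1 : (((k + 1)!) : ℝ) = ((k:ℝ) + 1) * k ! := by
    push_cast [Nat.factorial_succ k]; ring
  have hf2 : ((((k + 1) + (ν + 1))!) : ℝ) = ((k:ℝ) + ν + 2) * ((k + (ν + 1))!) := by
    have e : (k + 1) + (ν + 1) = (k + (ν + 1)) + 1 := by omega
    rw [e]
    push_cast [Nat.factorial_succ (k + (ν + 1))]; ring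
  have ha : ((k ! : ℝ)) ≠ 0 := by positivity
  have hb : (((k + (ν + 1))!) : ℝ) ≠ 0 := by positivity
  calc 2 * (2 * u * (u ^ (ν + 1 + 2 * k) / (k ! * (k + (ν + 1))!)))
      = u ^ (ν + 2 * k + 1) / ((k ! * (k + (ν + 1))!) * (((k:ℝ) + 1) * ((k:ℝ) + ν + 2)))
        * (4 * u * (((k:ℝ) + 1) * ((k:ℝ) + ν + 2))) := by
        field_simp
        ring
    _ ≤ u ^ (ν + 2 * k + 1) / ((k ! * (k + (ν + 1))!) * (((k:ℝ) + 1) * ((k:ℝ) + ν + 2)))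
        * ((2 * k + ν + 2) * (((k:ℝ) + 1) * ((k:ℝ) + ν + 2)) + u ^ 2 * (2 * ((k:ℝ) + 1) + ν + 2)) := h2
    _ = u ^ (ν + 2 * k + 1) * (2 * k + ν + 2) / (k ! * (k + (ν + 1))!)
        + u ^ (ν + 2 * (k + 1) + 1) * (2 * (k + 1) + ν + 2) / ((k + 1)! * ((k + 1) + (ν + 1))!) := by
        rw [hf1, hf2]
        field_simp
        ring

/-- For `w > 0` and `ν ≥ 0`, `I_{ν+1}(w) < I_ν(w)/(1 + ν/w)`. -/
theorem besselI_ratio_bound (ν : ℕ) (w : ℝ) (hw : 0 < w) :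
    besselI (ν + 1) w < besselI ν w / (1 + (ν : ℝ) / w) := by
  have hu : 0 < w / 2 := by positivity
  rw [besselI_eq_series ν w, besselI_eq_series (ν + 1) w]
  have hsA := summable_bessel_series ν (w / 2) hu
  have hsB := summable_bessel_series (ν + 1) (w / 2) hu
  have hc : Summable (fun k : ℕ =>
      2 * (w / 2) * ((w / 2) ^ (ν + 2 * k) / (k ! * (k + ν)!))
        - (ν : ℝ) * ((w / 2) ^ (ν + 1 + 2 * k) / (k ! * (k + (ν + 1))!))) :=
    (hsA.mul_left _).sub (hsB.mul_left _)
  have hc1 : Summable (fun k : ℕ =>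
      2 * (w / 2) * ((w / 2) ^ (ν + 2 * (k + 1)) / ((k + 1)! * ((k + 1) + ν)!))
        - (ν : ℝ) * ((w / 2) ^ (ν + 1 + 2 * (k + 1)) / ((k + 1)! * ((k + 1) + (ν + 1))!))) :=
    (summable_nat_add_iff 1).2 hc
  have hq : Summable (fun k : ℕ =>
      2 * (w / 2) * ((w / 2) ^ (ν + 1 + 2 * k) / (k ! * (k + (ν + 1))!))) :=
    hsB.mul_left _
  have hcpos : ∀ k : ℕ,
      0 < 2 * (w / 2) * ((w / 2) ^ (ν + 2 * k) / (k ! * (k + ν)!))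
        - (ν : ℝ) * ((w / 2) ^ (ν + 1 + 2 * k) / (k ! * (k + (ν + 1))!)) := by
    intro k
    rw [c_formula ν k (w / 2) hu]
    positivity
  -- step 1: termwise bound
  have step1 : (∑' k : ℕ, 2 * (w / 2) * ((w / 2) ^ (ν + 1 + 2 * k) / (k ! * (k + (ν + 1))!)))
      ≤ ∑' k : ℕ,
        ((2 * (w / 2) * ((w / 2) ^ (ν + 2 * k) / (k ! * (k + ν)!))
          - (ν : ℝ) * ((w / 2) ^ (ν + 1 + 2 * k) / (k ! * (k + (ν + 1))!)))
        + (2 * (w / 2) * ((w / 2) ^ (ν + 2 * (k + 1)) / ((k + 1)! * ((k + 1) + ν)!))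
          - (ν : ℝ) * ((w / 2) ^ (ν + 1 + 2 * (k + 1)) / ((k + 1)! * ((k + 1) + (ν + 1))!)))) / 2 := by
    apply Summable.tsum_le_tsum _ hq ((hc.add hc1).div_const 2)
    intro k
    have hk := key_ineq ν k (w / 2) hu
    have e : (2 * ((k:ℝ) + 1) + ν + 2) = (2 * ((k + 1 : ℕ):ℝ) + ν + 2) := by push_cast; ring
    rw [e] at hk
    rw [← c_formula ν k (w / 2) hu, ← c_formula ν (k + 1) (w / 2) hu] at hk
    linarith
  -- step 2: compute the RHS of step1
  have hshift := Summable.tsum_eq_zero_add hc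
  have step2 : (∑' k : ℕ,
        ((2 * (w / 2) * ((w / 2) ^ (ν + 2 * k) / (k ! * (k + ν)!))
          - (ν : ℝ) * ((w / 2) ^ (ν + 1 + 2 * k) / (k ! * (k + (ν + 1))!)))
        + (2 * (w / 2) * ((w / 2) ^ (ν + 2 * (k + 1)) / ((k + 1)! * ((k + 1) + ν)!))
          - (ν : ℝ) * ((w / 2) ^ (ν + 1 + 2 * (k + 1)) / ((k + 1)! * ((k + 1) + (ν + 1))!)))) / 2)
      = (∑' k : ℕ,
        (2 * (w / 2) * ((w / 2) ^ (ν + 2 * k) / (k ! * (k + ν)!))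
          - (ν : ℝ) * ((w / 2) ^ (ν + 1 + 2 * k) / (k ! * (k + (ν + 1))!))))
        - (2 * (w / 2) * ((w / 2) ^ (ν + 2 * 0) / (0 ! * (0 + ν)!))
          - (ν : ℝ) * ((w / 2) ^ (ν + 1 + 2 * 0) / (0 ! * (0 + (ν + 1))!))) / 2 := by
    rw [tsum_div_const, Summable.tsum_add hc hc1]
    rw [hshift]
    ring
  -- step 3: linearity of tsum
  have step3 : (∑' k : ℕ,
      (2 * (w / 2) * ((w / 2) ^ (ν + 2 * k) / (k ! * (k + ν)!))
        - (ν : ℝ) * ((w / 2) ^ (ν + 1 + 2 * k) / (k ! * (k + (ν + 1))!))))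
      = 2 * (w / 2) * (∑' k : ℕ, (w / 2) ^ (ν + 2 * k) / (k ! * (k + ν)!))
        - (ν : ℝ) * (∑' k : ℕ, (w / 2) ^ (ν + 1 + 2 * k) / (k ! * (k + (ν + 1))!)) := by
    rw [Summable.tsum_sub (hsA.mul_left _) (hsB.mul_left _), tsum_mul_left, tsum_mul_left]
  have hqsum : (∑' k : ℕ, 2 * (w / 2) * ((w / 2) ^ (ν + 1 + 2 * k) / (k ! * (k + (ν + 1))!)))
      = 2 * (w / 2) * (∑' k : ℕ, (w / 2) ^ (ν + 1 + 2 * k) / (k ! * (k + (ν + 1))!)) :=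
    tsum_mul_left
  set SA := ∑' k : ℕ, (w / 2) ^ (ν + 2 * k) / (k ! * (k + ν)!) with hSA
  set SB := ∑' k : ℕ, (w / 2) ^ (ν + 1 + 2 * k) / (k ! * (k + (ν + 1))!) with hSB
  have hc0 := hcpos 0
  have hmain : (ν : ℝ) * SB + w * SB < w * SA := by
    have h1 : 2 * (w / 2) * SB ≤ (2 * (w / 2) * SA - (ν : ℝ) * SB)
        - (2 * (w / 2) * ((w / 2) ^ (ν + 2 * 0) / (0 ! * (0 + ν)!))
          - (ν : ℝ) * ((w / 2) ^ (ν + 1 + 2 * 0) / (0 ! * (0 + (ν + 1))!))) / 2 := by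
      rw [← step3, ← hqsum]
      calc (∑' k : ℕ, 2 * (w / 2) * ((w / 2) ^ (ν + 1 + 2 * k) / (k ! * (k + (ν + 1))!)))
          ≤ _ := step1
        _ = _ := step2
    have h2w : 2 * (w / 2) = w := by ring
    rw [h2w] at h1
    linarith
  have hd : (0:ℝ) < 1 + (ν : ℝ) / w := by positivity
  rw [lt_div_iff₀ hd, ← mul_lt_mul_iff_of_pos_right hw]
  have he : SB * (1 + (ν : ℝ) / w) * w = (ν : ℝ) * SB + w * SB := by
    field_simp
    ring
  rw [he]
  nlinarith [hmain]
end

section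
/- Let c > 0, t > 0 and let k be an integer with k ≥ max(5ct, 2). Then e^{−ct} Σ_{ν=k}^{∞} (ν−k+2)(ν−k+1) I_ν(ct) ≤ 4 (ct)^k/(2k−1)!!. -/
open Real MeasureTheory intervalIntegral

namespace BesselAux

noncomputable def besselCoef (n ν : ℕ) : ℝ :=
  ∫ θ in (0:ℝ)..Real.pi, (Real.cos θ) ^ n * Real.cos (ν * θ)

lemma besselCoef_zero (ν : ℕ) : besselCoef 0 ν = if ν = 0 then Real.pi else 0 := by
  unfold besselCoef
  rcases Nat.eq_zero_or_pos ν with h | h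
  · simp [h]
  · have hν : (ν:ℝ) ≠ 0 := by positivity
    simp only [pow_zero, one_mul, if_neg h.ne']
    rw [intervalIntegral.integral_comp_mul_left Real.cos hν]
    simp [Real.sin_nat_mul_pi]

lemma besselCoef_nonneg : ∀ n ν, 0 ≤ besselCoef n ν := by
  intro n
  induction n with
  | zero =>
    intro ν; rw [besselCoef_zero]; split <;> positivity
  | succ n ih =>
    intro ν
    match ν with
    | 0 =>
      have h : besselCoef (n+1) 0 = besselCoef n 1 := by
        unfold besselCoef
        apply intervalIntegral.integral_congr
        intro θ _
        simp [pow_succ]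
      rw [h]; exact ih 1
    | (m+1) =>
      have key : besselCoef (n+1) (m+1) = (besselCoef n m + besselCoef n (m+2)) / 2 := by
        unfold besselCoef
        have h1 : ∀ θ : ℝ, (Real.cos θ)^(n+1) * Real.cos ((m+1 : ℕ) * θ)
            = ((Real.cos θ)^n * Real.cos ((m:ℕ) * θ)
              + (Real.cos θ)^n * Real.cos ((m+2 : ℕ) * θ)) / 2 := by
          intro θ
          have e1 := Real.cos_add ((m+1 : ℝ) * θ) θ
          have e2 := Real.cos_sub ((m+1 : ℝ) * θ) θ
          have h3 : ((m+1:ℕ):ℝ) * θ = (m+1 : ℝ) * θ := by push_cast; ring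
          have h4 : ((m:ℕ):ℝ) * θ = (m+1:ℝ) * θ - θ := by ring
          have h5 : ((m+2:ℕ):ℝ) * θ = (m+1:ℝ) * θ + θ := by push_cast; ring
          rw [h3, h4, h5, e1, e2, pow_succ]
          ring
        rw [intervalIntegral.integral_congr (fun θ _ => h1 θ)]
        rw [intervalIntegral.integral_div]
        rw [intervalIntegral.integral_add]
        · exact (Continuous.intervalIntegrable (by continuity) _ _)
        · exact (Continuous.intervalIntegrable (by continuity) _ _)
      rw [key]
      have := ih m
      have := ih (m+2)
      positivity

noncomputable def besselJ (ν : ℕ) (w : ℝ) : ℝ :=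
  ∫ θ in (0:ℝ)..Real.pi, Real.exp (w * Real.cos θ) * Real.cos (ν * θ)

lemma besselJ_eq_tsum (ν : ℕ) (w : ℝ) (hw : 0 ≤ w) :
    besselJ ν w = ∑' n : ℕ, w ^ n / n.factorial * besselCoef n ν := by
  have hπ := Real.pi_pos
  set F : ℕ → ℝ → ℝ := fun n θ => (w * Real.cos θ) ^ n / n.factorial * Real.cos (ν * θ) with hF
  have hcont : ∀ n, Continuous (F n) := by
    intro n; rw [hF]; dsimp only; continuity
  have hint : ∀ n, Integrable (F n) (volume.restrict (Set.Ioc (0:ℝ) Real.pi)) :=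
    fun n => ((hcont n).integrableOn_Ioc)
  have hptbound : ∀ n, ∀ θ : ℝ, ‖F n θ‖ ≤ w ^ n / n.factorial := by
    intro n θ
    rw [hF]; dsimp only
    rw [norm_mul, norm_div, norm_pow, Real.norm_natCast]
    have hc1 : ‖Real.cos ((ν:ℝ) * θ)‖ ≤ 1 := by
      rw [Real.norm_eq_abs]; exact Real.abs_cos_le_one _
    have hc2 : ‖w * Real.cos θ‖ ≤ w := by
      rw [norm_mul, Real.norm_eq_abs w, abs_of_nonneg hw, Real.norm_eq_abs]
      nlinarith [Real.abs_cos_le_one θ, abs_nonneg (Real.cos θ)]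
    calc ‖w * Real.cos θ‖ ^ n / (n.factorial : ℝ) * ‖Real.cos ((ν:ℝ) * θ)‖
        ≤ w ^ n / (n.factorial : ℝ) * 1 := by
          gcongr
      _ = w ^ n / n.factorial := mul_one _
  have hbound : ∀ n, (∫ θ, ‖F n θ‖ ∂(volume.restrict (Set.Ioc (0:ℝ) Real.pi)))
      ≤ Real.pi * (w ^ n / n.factorial) := by
    intro n
    calc (∫ θ, ‖F n θ‖ ∂(volume.restrict (Set.Ioc (0:ℝ) Real.pi)))
        ≤ ∫ _θ, w ^ n / n.factorial ∂(volume.restrict (Set.Ioc (0:ℝ) Real.pi)) :=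
          integral_mono ((hint n).norm) (integrable_const _) (hptbound n)
      _ = Real.pi * (w ^ n / n.factorial) := by
          rw [MeasureTheory.integral_const]
          simp [Real.volume_Ioc, ENNReal.toReal_ofReal hπ.le, smul_eq_mul]
          exact Or.inl hπ.le
  have hsum : Summable (fun n => ∫ θ, ‖F n θ‖ ∂(volume.restrict (Set.Ioc (0:ℝ) Real.pi))) := by
    apply Summable.of_nonneg_of_le
      (fun n => integral_nonneg (fun θ => norm_nonneg _)) hbound
    exact (Real.summable_pow_div_factorial w).mul_left Real.pi
  have hswap := MeasureTheory.integral_tsum_of_summable_integral_norm hint hsum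
  have hpt : ∀ θ : ℝ, Real.exp (w * Real.cos θ) * Real.cos (ν * θ) = ∑' n, F n θ := by
    intro θ
    have h := (Real.exp_eq_exp_ℝ ▸ NormedSpace.expSeries_div_hasSum_exp (w * Real.cos θ))
    exact (h.mul_right (Real.cos (ν * θ))).tsum_eq.symm
  unfold besselJ
  rw [intervalIntegral.integral_of_le hπ.le]
  calc (∫ θ in Set.Ioc (0:ℝ) Real.pi, Real.exp (w * Real.cos θ) * Real.cos (ν * θ))
      = ∫ θ in Set.Ioc (0:ℝ) Real.pi, (∑' n, F n θ) := by
        apply MeasureTheory.integral_congr_ae; filter_upwards with θ; exact hpt θ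
    _ = ∑' n, ∫ θ in Set.Ioc (0:ℝ) Real.pi, F n θ := hswap.symm
    _ = ∑' n : ℕ, w ^ n / n.factorial * besselCoef n ν := by
        congr 1; funext n
        have : ∀ θ : ℝ, F n θ = (w ^ n / n.factorial) * ((Real.cos θ)^n * Real.cos (ν * θ)) := by
          intro θ; rw [hF]; dsimp only; rw [mul_pow]; ring
        rw [MeasureTheory.integral_congr_ae (Filter.Eventually.of_forall this),
          MeasureTheory.integral_const_mul]
        unfold besselCoef
        rw [intervalIntegral.integral_of_le hπ.le]

lemma besselJ_nonneg (ν : ℕ) (w : ℝ) (hw : 0 ≤ w) : 0 ≤ besselJ ν w := by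
  rw [besselJ_eq_tsum ν w hw]
  apply tsum_nonneg
  intro n
  have h1 : 0 ≤ w ^ n / (n.factorial : ℝ) := by positivity
  exact mul_nonneg h1 (besselCoef_nonneg n ν)

lemma contJ (w : ℝ) (a : ℝ) :
    Continuous (fun θ : ℝ => Real.exp (w * Real.cos θ) * Real.cos (a * θ)) := by
  fun_prop

lemma besselJ_rec (μ : ℕ) (w : ℝ) :
    ((μ:ℝ) + 1) * besselJ (μ+1) w = w / 2 * (besselJ μ w - besselJ (μ+2) w) := by
  have hπ := Real.pi_pos
  have hud : ∀ x ∈ Set.uIcc (0:ℝ) Real.pi,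
      HasDerivAt (fun θ => Real.exp (w * Real.cos θ))
        (Real.exp (w * Real.cos x) * (w * -Real.sin x)) x := by
    intro x _
    have h1 : HasDerivAt (fun θ : ℝ => w * Real.cos θ) (w * -Real.sin x) x :=
      (Real.hasDerivAt_cos x).const_mul w
    exact (Real.hasDerivAt_exp (w * Real.cos x)).comp x h1
  have hvd : ∀ x ∈ Set.uIcc (0:ℝ) Real.pi,
      HasDerivAt (fun θ => Real.sin (((μ:ℝ)+1) * θ))
        (Real.cos (((μ:ℝ)+1) * x) * ((μ:ℝ)+1)) x := by
    intro x _
    have h1 : HasDerivAt (fun θ : ℝ => ((μ:ℝ)+1) * θ) ((μ:ℝ)+1) x := by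
      simpa using (hasDerivAt_id x).const_mul ((μ:ℝ)+1)
    exact (Real.hasDerivAt_sin (((μ:ℝ)+1) * x)).comp x h1
  have hu'int : IntervalIntegrable
      (fun x => Real.exp (w * Real.cos x) * (w * -Real.sin x)) volume 0 Real.pi :=
    (Continuous.intervalIntegrable (by fun_prop) _ _)
  have hv'int : IntervalIntegrable
      (fun x => Real.cos (((μ:ℝ)+1) * x) * ((μ:ℝ)+1)) volume 0 Real.pi :=
    (Continuous.intervalIntegrable (by fun_prop) _ _)
  have H := intervalIntegral.integral_mul_deriv_eq_deriv_mul hud hvd hu'int hv'int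
  have hvπ : Real.sin (((μ:ℝ)+1) * Real.pi) = 0 := by
    have : ((μ:ℝ)+1) * Real.pi = ((μ+1 : ℕ) : ℝ) * Real.pi := by push_cast; ring
    rw [this, Real.sin_nat_mul_pi]
  simp only [hvπ, Real.sin_zero, mul_zero, sub_zero, zero_sub] at H
  have hL : (∫ x in (0:ℝ)..Real.pi,
      Real.exp (w * Real.cos x) * (Real.cos (((μ:ℝ)+1) * x) * ((μ:ℝ)+1)))
      = ((μ:ℝ)+1) * besselJ (μ+1) w := by
    unfold besselJ
    rw [show (fun x => Real.exp (w * Real.cos x) * (Real.cos (((μ:ℝ)+1) * x) * ((μ:ℝ)+1)))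
        = fun x => (Real.exp (w * Real.cos x) * Real.cos (((μ+1:ℕ):ℝ) * x)) * ((μ:ℝ)+1) from
      funext fun x => by push_cast; ring]
    rw [intervalIntegral.integral_mul_const]
    ring
  have hR : (-∫ x in (0:ℝ)..Real.pi,
      (Real.exp (w * Real.cos x) * (w * -Real.sin x)) * Real.sin (((μ:ℝ)+1) * x))
      = w / 2 * (besselJ μ w - besselJ (μ+2) w) := by
    have trig : ∀ x : ℝ,
        (Real.exp (w * Real.cos x) * (w * -Real.sin x)) * Real.sin (((μ:ℝ)+1) * x)
        = (-(w/2)) * (Real.exp (w * Real.cos x) * Real.cos ((μ:ℝ) * x))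
          + (w/2) * (Real.exp (w * Real.cos x) * Real.cos (((μ+2:ℕ):ℝ) * x)) := by
      intro x
      have e1 := Real.cos_sub (((μ:ℝ)+1) * x) x
      have e2 := Real.cos_add (((μ:ℝ)+1) * x) x
      have h4 : (μ:ℝ) * x = ((μ:ℝ)+1) * x - x := by ring
      have h5 : ((μ+2:ℕ):ℝ) * x = ((μ:ℝ)+1) * x + x := by push_cast; ring
      rw [h4, h5, e1, e2]
      ring
    rw [intervalIntegral.integral_congr (fun x _ => trig x)]
    rw [intervalIntegral.integral_add
      (f := fun x => -(w/2) * (Real.exp (w * Real.cos x) * Real.cos ((μ:ℝ) * x)))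
      (g := fun x => (w/2) * (Real.exp (w * Real.cos x) * Real.cos (((μ+2:ℕ):ℝ) * x)))
      ((continuous_const.mul (contJ w μ)).intervalIntegrable _ _)
      ((continuous_const.mul (contJ w (((μ+2:ℕ)):ℝ))).intervalIntegrable _ _)]
    rw [intervalIntegral.integral_const_mul, intervalIntegral.integral_const_mul]
    unfold besselJ
    push_cast
    ring
  rw [hL, hR] at H
  exact H

lemma besselJ_zero_le (w : ℝ) (hw : 0 ≤ w) : besselJ 0 w ≤ Real.pi * Real.exp w := by
  have hπ := Real.pi_pos
  unfold besselJ
  have h1 : ∀ θ : ℝ, Real.exp (w * Real.cos θ) * Real.cos ((0:ℕ) * θ)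
      = Real.exp (w * Real.cos θ) := by
    intro θ; simp
  rw [intervalIntegral.integral_congr (fun θ _ => h1 θ)]
  calc (∫ θ in (0:ℝ)..Real.pi, Real.exp (w * Real.cos θ))
      ≤ ∫ _θ in (0:ℝ)..Real.pi, Real.exp w := by
        apply intervalIntegral.integral_mono_on hπ.le
          (Continuous.intervalIntegrable (by fun_prop) _ _)
          (Continuous.intervalIntegrable (by fun_prop) _ _)
        intro θ _
        apply Real.exp_le_exp.mpr
        nlinarith [Real.cos_le_one θ, Real.neg_one_le_cos θ]
    _ = Real.pi * Real.exp w := by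
        rw [intervalIntegral.integral_const]; simp [smul_eq_mul]

lemma besselI_eq (ν : ℕ) (w : ℝ) : besselI ν w = (1 / Real.pi) * besselJ ν w := rfl

lemma besselI_nonneg (ν : ℕ) (w : ℝ) (hw : 0 ≤ w) : 0 ≤ besselI ν w := by
  rw [besselI_eq]
  have hπ := Real.pi_pos
  have := besselJ_nonneg ν w hw
  positivity

lemma besselI_step (μ : ℕ) (w : ℝ) (hw : 0 ≤ w) :
    ((μ:ℝ) + 1) * besselI (μ+1) w ≤ w / 2 * besselI μ w := by
  have hπ := Real.pi_pos
  have h := besselJ_rec μ w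
  have h2 : ((μ:ℝ)+1) * besselJ (μ+1) w ≤ w / 2 * besselJ μ w := by
    rw [h]
    have := besselJ_nonneg (μ+2) w hw
    nlinarith
  rw [besselI_eq, besselI_eq]
  calc ((μ:ℝ)+1) * (1/Real.pi * besselJ (μ+1) w)
      = 1/Real.pi * (((μ:ℝ)+1) * besselJ (μ+1) w) := by ring
    _ ≤ 1/Real.pi * (w/2 * besselJ μ w) := by
        apply mul_le_mul_of_nonneg_left h2 (by positivity)
    _ = w / 2 * (1/Real.pi * besselJ μ w) := by ring

lemma besselI_le (w : ℝ) (hw : 0 ≤ w) :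
    ∀ μ : ℕ, besselI μ w ≤ w ^ μ / (2 ^ μ * μ.factorial) * Real.exp w := by
  intro μ
  induction μ with
  | zero =>
    have hπ := Real.pi_pos
    rw [besselI_eq]
    have h := besselJ_zero_le w hw
    simp only [pow_zero, Nat.factorial_zero, Nat.cast_one, mul_one, one_div]
    calc Real.pi⁻¹ * besselJ 0 w ≤ Real.pi⁻¹ * (Real.pi * Real.exp w) := by
          apply mul_le_mul_of_nonneg_left h (by positivity)
      _ = Real.exp w := by field_simp
      _ = 1⁻¹ * Real.exp w := by ring
  | succ μ ih =>
    have hstep := besselI_step μ w hw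
    have hμpos : (0:ℝ) < (μ:ℝ) + 1 := by positivity
    have h1 : besselI (μ+1) w ≤ w / (2 * ((μ:ℝ)+1)) * besselI μ w := by
      rw [div_mul_eq_mul_div, le_div_iff₀ (by positivity)]
      calc besselI (μ+1) w * (2 * ((μ:ℝ)+1)) = 2 * (((μ:ℝ)+1) * besselI (μ+1) w) := by ring
        _ ≤ 2 * (w / 2 * besselI μ w) := by linarith
        _ = w * besselI μ w := by ring
    calc besselI (μ+1) w ≤ w / (2 * ((μ:ℝ)+1)) * besselI μ w := h1
      _ ≤ w / (2 * ((μ:ℝ)+1)) * (w ^ μ / (2 ^ μ * μ.factorial) * Real.exp w) := by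
          apply mul_le_mul_of_nonneg_left ih (by positivity)
      _ = w ^ (μ+1) / (2 ^ (μ+1) * (μ+1).factorial) * Real.exp w := by
          rw [Nat.factorial_succ]
          push_cast
          field_simp
          ring
end BesselAux
namespace BesselAux

lemma besselI_geo (w : ℝ) (hw : 0 ≤ w) (k : ℕ) (hk : 1 ≤ k) (h5 : 5 * w ≤ (k:ℝ)) :
    ∀ i : ℕ, besselI (k+i) w ≤ (1/10:ℝ)^i * besselI k w := by
  intro i
  induction i with
  | zero => simp
  | succ i ih =>
    have hkpos : (0:ℝ) < (k:ℝ) + (i:ℝ) + 1 := by positivity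
    have hstep := besselI_step (k+i) w hw
    have hcast : ((k+i : ℕ):ℝ) + 1 = (k:ℝ) + (i:ℝ) + 1 := by push_cast; ring
    rw [hcast] at hstep
    have h1 : besselI (k+(i+1)) w ≤ w / (2 * ((k:ℝ)+(i:ℝ)+1)) * besselI (k+i) w := by
      have : k + (i+1) = (k+i) + 1 := by ring
      rw [this, div_mul_eq_mul_div, le_div_iff₀ (by positivity)]
      calc besselI ((k+i)+1) w * (2 * ((k:ℝ)+(i:ℝ)+1))
          = 2 * (((k:ℝ)+(i:ℝ)+1) * besselI ((k+i)+1) w) := by ring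
        _ ≤ 2 * (w / 2 * besselI (k+i) w) := by linarith
        _ = w * besselI (k+i) w := by ring
    have h2 : w / (2 * ((k:ℝ)+(i:ℝ)+1)) ≤ 1/10 := by
      rw [div_le_div_iff₀ (by positivity) (by norm_num)]
      nlinarith [Nat.cast_nonneg (α:=ℝ) i]
    calc besselI (k+(i+1)) w ≤ w / (2 * ((k:ℝ)+(i:ℝ)+1)) * besselI (k+i) w := h1
      _ ≤ (1/10) * besselI (k+i) w :=
          mul_le_mul_of_nonneg_right h2 (besselI_nonneg _ _ hw)
      _ ≤ (1/10) * ((1/10:ℝ)^i * besselI k w) := by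
          apply mul_le_mul_of_nonneg_left ih (by norm_num)
      _ = (1/10:ℝ)^(i+1) * besselI k w := by rw [pow_succ]; ring

lemma quad_le (i : ℕ) : ((i:ℝ)+2) * ((i:ℝ)+1) ≤ 2 * 5 ^ i := by
  induction i with
  | zero => norm_num
  | succ i ih =>
    push_cast
    have : (0:ℝ) ≤ (i:ℝ) := Nat.cast_nonneg i
    calc ((i:ℝ)+1+2) * ((i:ℝ)+1+1) ≤ 5 * (((i:ℝ)+2) * ((i:ℝ)+1)) := by nlinarith
      _ ≤ 5 * (2 * 5 ^ i) := by linarith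
      _ = 2 * 5 ^ (i+1) := by rw [pow_succ]; ring

lemma dfac_mono : ∀ n : ℕ, n.doubleFactorial ≤ (n+1).doubleFactorial
  | 0 => le_refl _
  | 1 => by norm_num [Nat.doubleFactorial]
  | (n+2) => by
    rw [show n+2+1 = n+1+2 from rfl, Nat.doubleFactorial, Nat.doubleFactorial]
    exact Nat.mul_le_mul (by omega) (dfac_mono n)

lemma dfac_le (k : ℕ) (hk : 1 ≤ k) :
    ((2*k-1).doubleFactorial : ℝ) ≤ 2 ^ k * k.factorial := by
  have h1 : (2*k-1).doubleFactorial ≤ (2*k).doubleFactorial := by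
    have : 2*k-1+1 = 2*k := by omega
    calc (2*k-1).doubleFactorial ≤ (2*k-1+1).doubleFactorial := dfac_mono _
      _ = (2*k).doubleFactorial := by rw [this]
  have h2 : (2*k).doubleFactorial = 2 ^ k * k.factorial := Nat.doubleFactorial_two_mul k
  calc ((2*k-1).doubleFactorial : ℝ) ≤ ((2*k).doubleFactorial : ℕ) := by exact_mod_cast h1
    _ = 2 ^ k * k.factorial := by rw [h2]; push_cast; ring

end BesselAux

open BesselAux in
/-- If `k ≥ max(5ct, 2)` then
`e^{−ct} Σ_{ν=k}^∞ (ν−k+2)(ν−k+1) I_ν(ct) ≤ 4(ct)^k/(2k−1)!!`. -/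
theorem besselI_tail_bound (c t : ℝ) (hc : 0 < c) (ht : 0 < t)
    (k : ℕ) (hk2 : 2 ≤ k) (hk5 : 5 * (c * t) ≤ (k : ℝ)) :
    Real.exp (-(c * t)) *
        ∑' i : ℕ, ((i : ℝ) + 2) * ((i : ℝ) + 1) * besselI (k + i) (c * t) ≤
      4 * (c * t) ^ k / ((2 * k - 1).doubleFactorial : ℝ) := by
  set w := c * t with hwdef
  have hw : 0 < w := mul_pos hc ht
  have hk1 : 1 ≤ k := le_trans (by norm_num) hk2
  have hIk0 : 0 ≤ besselI k w := besselI_nonneg k w hw.le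
  set f : ℕ → ℝ := fun i => ((i:ℝ)+2) * ((i:ℝ)+1) * besselI (k+i) w with hf
  have hf0 : ∀ i, 0 ≤ f i := by
    intro i
    exact mul_nonneg (by positivity) (besselI_nonneg _ _ hw.le)
  have hfg : ∀ i, f i ≤ 2 * (1/2:ℝ)^i * besselI k w := by
    intro i
    have h1 : besselI (k+i) w ≤ (1/10:ℝ)^i * besselI k w := besselI_geo w hw.le k hk1 hk5 i
    have h2 : ((i:ℝ)+2) * ((i:ℝ)+1) ≤ 2 * 5 ^ i := quad_le i
    have h3 : (5:ℝ)^i * (1/10:ℝ)^i = (1/2:ℝ)^i := by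
      rw [← mul_pow]; norm_num
    calc f i ≤ ((i:ℝ)+2) * ((i:ℝ)+1) * ((1/10:ℝ)^i * besselI k w) :=
          mul_le_mul_of_nonneg_left h1 (by positivity)
      _ ≤ 2 * 5^i * ((1/10:ℝ)^i * besselI k w) := by
          apply mul_le_mul_of_nonneg_right h2 (by positivity)
      _ = 2 * ((5:ℝ)^i * (1/10:ℝ)^i) * besselI k w := by ring
      _ = 2 * (1/2:ℝ)^i * besselI k w := by rw [h3]
  have hgsum : Summable (fun i : ℕ => 2 * (1/2:ℝ)^i * besselI k w) := by
    apply Summable.mul_right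
    exact (summable_geometric_of_lt_one (by norm_num) (by norm_num)).mul_left 2
  have hfsum : Summable f := Summable.of_nonneg_of_le hf0 hfg hgsum
  have htsum : (∑' i, f i) ≤ 4 * besselI k w := by
    calc (∑' i, f i) ≤ ∑' i, 2 * (1/2:ℝ)^i * besselI k w := Summable.tsum_le_tsum hfg hfsum hgsum
      _ = 2 * (∑' i, (1/2:ℝ)^i) * besselI k w := by
          rw [tsum_mul_right, tsum_mul_left]
      _ = 4 * besselI k w := by
          rw [tsum_geometric_of_lt_one (by norm_num) (by norm_num)]
          norm_num
  have hIkle : besselI k w ≤ w ^ k / (2^k * k.factorial) * Real.exp w := besselI_le w hw.le k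
  have hexp : (0:ℝ) < Real.exp (-w) := Real.exp_pos _
  calc Real.exp (-w) * ∑' i, f i
      ≤ Real.exp (-w) * (4 * besselI k w) := mul_le_mul_of_nonneg_left htsum hexp.le
    _ ≤ Real.exp (-w) * (4 * (w ^ k / (2^k * k.factorial) * Real.exp w)) := by
        apply mul_le_mul_of_nonneg_left _ hexp.le
        apply mul_le_mul_of_nonneg_left hIkle (by norm_num)
    _ = (Real.exp (-w) * Real.exp w) * (4 * w ^ k) / (2^k * k.factorial) := by ring
    _ = 4 * w ^ k / (2^k * k.factorial) := by
        rw [← Real.exp_add]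
        norm_num
    _ ≤ 4 * w ^ k / ((2*k-1).doubleFactorial : ℝ) := by
        apply div_le_div_of_nonneg_left (by positivity) _ (dfac_le k hk1)
        have := Nat.doubleFactorial_pos (2*k-1)
        positivity
end
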